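/- arXiv:1311.5533 — 9 statements merged into one kernel-verified Lean document; each statement's English description precedes it below -/
import Mathlib

section
/- Let R = {α₁,…,α_k} be a finite multiset of real numbers with 1 = α₁ ≤ α₂ ≤ … ≤ α_k, and let S(R)_j denote the j-th element of the monotone increasing rearrangement of the multiset consisting of k zeros and two copies of each αᵢℕ. Then limsup_{j→∞} (S(R)_{j+1} − S(R)_j) = 1. -/
open Filter Topology

noncomputable section

/-- Value map for the multiset consisting of `k` zeros together with two copies of
`α i * ℕ⁺` for each `i`. -/
def sval {k : ℕ} (α : Fin k → ℝ) : (Fin k ⊕ (Fin k × ℕ+ × Fin 2)) → ℝ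
  | .inl _ => 0
  | .inr (i, n, _) => (n : ℝ) * α i

/-- `S` is the monotone increasing rearrangement of the multiset of `k` zeros together
with two copies of each `α i * ℕ⁺`. -/
def IsSEnum {k : ℕ} (α : Fin k → ℝ) (S : ℕ → ℝ) : Prop :=
  Monotone S ∧ ∃ e : ℕ ≃ (Fin k ⊕ (Fin k × ℕ+ × Fin 2)), ∀ j, S j = sval α (e j)

/-- `F` (mapping the `j`-th element of the multiset enumerated by `S` to the `F j`-th
element of the multiset enumerated by `A`) is close: for each `ε > 0` only finitely
many elements move by at least `ε`. -/
def CloseSeq (S A : ℕ → ℝ) (F : ℕ → ℕ) : Prop :=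
  ∀ ε > 0, {j : ℕ | ε ≤ |A (F j) - S j|}.Finite

/-- `F` is an almost-bijection: all but finitely many targets have exactly one preimage. -/
def AlmostBij (F : ℕ → ℕ) : Prop := {n : ℕ | ¬ ∃! j : ℕ, F j = n}.Finite
lemma dirichlet_base {k : ℕ} (β : Fin k → ℝ) {δ : ℝ} (hδ : 0 < δ) :
    ∃ N : ℕ, 1 ≤ N ∧ ∀ i, ∃ m : ℤ, |(N : ℝ) * β i - m| ≤ δ := by
  obtain ⟨Q, hQ⟩ := exists_nat_gt (1/δ)
  have hQ0 : 0 < (Q:ℝ) := lt_trans (by positivity) hQ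
  have hQδ : 1/(Q:ℝ) ≤ δ := by
    rw [div_le_iff₀ hQ0]
    rw [div_lt_iff₀ hδ] at hQ
    nlinarith
  set f : Fin (Q^k + 1) → (Fin k → Fin Q) := fun n i =>
    ⟨⌊(Q:ℝ) * Int.fract ((n:ℕ) * β i)⌋₊, by
      have h1 : (Q:ℝ) * Int.fract ((n:ℕ) * β i) < Q := by
        nlinarith [Int.fract_lt_one (((n:ℕ):ℝ) * β i), Int.fract_nonneg (((n:ℕ):ℝ) * β i)]
      have h0 : (0:ℝ) ≤ (Q:ℝ) * Int.fract ((n:ℕ) * β i) := by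
        have := Int.fract_nonneg (((n:ℕ):ℝ) * β i); positivity
      exact (Nat.floor_lt h0).mpr h1⟩ with hf
  have hcard : Fintype.card (Fin k → Fin Q) < Fintype.card (Fin (Q^k+1)) := by
    simp [Fintype.card_fun]
  obtain ⟨a, b, hab, hfab⟩ := Fintype.exists_ne_map_eq_of_card_lt f hcard
  have key : ∀ a b : Fin (Q^k+1), a < b → f a = f b →
      ∃ N : ℕ, 1 ≤ N ∧ ∀ i, ∃ m : ℤ, |(N : ℝ) * β i - m| ≤ δ := by
    intro a b hlt hfe
    refine ⟨(b:ℕ) - (a:ℕ), by omega, fun i => ?_⟩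
    have hnat : (a:ℕ) < (b:ℕ) := hlt
    refine ⟨⌊((b:ℕ):ℝ) * β i⌋ - ⌊((a:ℕ):ℝ) * β i⌋, ?_⟩
    have hval : ⌊(Q:ℝ) * Int.fract ((a:ℕ) * β i)⌋₊ = ⌊(Q:ℝ) * Int.fract ((b:ℕ) * β i)⌋₊ := by
      have := congrFun hfe i
      simpa [hf] using congrArg Fin.val this
    set x := ((a:ℕ):ℝ) * β i
    set y := ((b:ℕ):ℝ) * β i
    have hx0 : (0:ℝ) ≤ (Q:ℝ) * Int.fract x := by
      have := Int.fract_nonneg x; positivity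
    have hy0 : (0:ℝ) ≤ (Q:ℝ) * Int.fract y := by
      have := Int.fract_nonneg y; positivity
    have h1 : |(Q:ℝ) * Int.fract y - (Q:ℝ) * Int.fract x| < 1 := by
      have la := Nat.floor_le hx0
      have lb := Nat.lt_floor_add_one ((Q:ℝ) * Int.fract x)
      have la' := Nat.floor_le hy0
      have lb' := Nat.lt_floor_add_one ((Q:ℝ) * Int.fract y)
      rw [hval] at la lb
      rw [abs_sub_lt_iff]
      constructor <;> linarith
    have h2 : |Int.fract y - Int.fract x| < 1/Q := by
      rw [lt_div_iff₀ hQ0]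
      calc |Int.fract y - Int.fract x| * Q = |(Q:ℝ) * Int.fract y - (Q:ℝ) * Int.fract x| := by
            rw [← mul_comm (Q:ℝ), ← mul_sub, abs_mul, abs_of_pos hQ0, mul_comm]
        _ < 1 := h1
    have hcast : ((((b:ℕ) - (a:ℕ) : ℕ)):ℝ) = ((b:ℕ):ℝ) - ((a:ℕ):ℝ) := by
      push_cast [Nat.cast_sub hnat.le]; ring
    have heq : ((((b:ℕ) - (a:ℕ) : ℕ)):ℝ) * β i - (⌊y⌋ - ⌊x⌋ : ℤ) = Int.fract y - Int.fract x := by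
      rw [hcast, Int.fract, Int.fract]
      push_cast
      ring
    rw [heq]
    exact le_trans h2.le hQδ
  rcases hab.lt_or_gt with h | h
  · exact key a b h hfab
  · exact key b a h hfab.symm

lemma dirichlet {k : ℕ} (β : Fin k → ℝ) {δ : ℝ} (hδ : 0 < δ) (M : ℕ) :
    ∃ N : ℕ, M ≤ N ∧ 1 ≤ N ∧ ∀ i, ∃ m : ℤ, |(N : ℝ) * β i - m| ≤ δ := by
  have hδ' : 0 < δ / (M+1) := by positivity
  obtain ⟨N₀, hN₀, h⟩ := dirichlet_base β hδ'
  refine ⟨(M+1) * N₀, ?_, ?_, fun i => ?_⟩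
  · calc M ≤ (M+1) * 1 := by omega
      _ ≤ (M+1) * N₀ := by exact Nat.mul_le_mul_left _ hN₀
  · exact Nat.one_le_iff_ne_zero.mpr (by positivity)
  · obtain ⟨m, hm⟩ := h i
    refine ⟨(M+1) * m, ?_⟩
    have hc : ((((M+1) * N₀ : ℕ)):ℝ) * β i - (((M+1) * m : ℤ):ℝ)
        = ((M:ℝ)+1) * ((N₀:ℝ) * β i - m) := by push_cast; ring
    rw [hc, abs_mul, abs_of_pos (by positivity : (0:ℝ) < (M:ℝ)+1)]
    calc ((M:ℝ)+1) * |(N₀:ℝ) * β i - m| ≤ ((M:ℝ)+1) * (δ/(M+1)) := by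
          apply mul_le_mul_of_nonneg_left hm (by positivity)
      _ = δ := by field_simp

lemma finite_sval_le {k : ℕ} (α : Fin k → ℝ) (hle : ∀ i, 1 ≤ α i) (c : ℝ) :
    {x : Fin k ⊕ (Fin k × ℕ+ × Fin 2) | sval α x ≤ c}.Finite := by
  have h2 : {n : ℕ+ | (n:ℕ) ≤ ⌈c⌉₊}.Finite :=
    Set.Finite.preimage (Set.injOn_of_injective PNat.coe_injective)
      (Set.finite_Iic ⌈c⌉₊)
  have h3 : ((Set.univ : Set (Fin k)) ×ˢ ({n : ℕ+ | (n:ℕ) ≤ ⌈c⌉₊} ×ˢ (Set.univ : Set (Fin 2)))).Finite :=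
    Set.finite_univ.prod (h2.prod Set.finite_univ)
  refine Set.Finite.subset ((Set.finite_univ.image Sum.inl).union (h3.image Sum.inr)) ?_
  rintro (i | ⟨i, n, t⟩) hx
  · exact Or.inl ⟨i, trivial, rfl⟩
  · refine Or.inr ⟨(i,n,t), ⟨trivial, ?_, trivial⟩, rfl⟩
    have hx' : (n:ℝ) * α i ≤ c := hx
    have hn : (0:ℝ) < (n:ℝ) := by positivity
    have hv : (n:ℝ) ≤ c := by nlinarith [hle i]
    have : ((n:ℕ):ℝ) ≤ (⌈c⌉₊:ℝ) := by
      push_cast; exact hv.trans (Nat.le_ceil c)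
    exact_mod_cast this
theorem stmt2 {k : ℕ} (α : Fin k → ℝ) (hle : ∀ i, 1 ≤ α i) (h1 : ∃ i, α i = 1)
    (S : ℕ → ℝ) (hS : IsSEnum α S) :
    limsup (fun j => S (j + 1) - S j) atTop = 1 := by
  obtain ⟨hmono, e, hSe⟩ := hS
  obtain ⟨i₀, hi₀⟩ := h1
  have hsval0 : ∀ x, 0 ≤ sval α x := by
    rintro (i | ⟨i, n, t⟩)
    · exact le_refl 0
    · have : (0:ℝ) < (n:ℝ) := by positivity
      have := hle i
      show (0:ℝ) ≤ (n:ℝ) * α i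
      nlinarith
  have hS0 : ∀ j, 0 ≤ S j := fun j => (hSe j) ▸ hsval0 (e j)
  -- every positive integer is a value of S
  have hint : ∀ n : ℕ+, S (e.symm (Sum.inr (i₀, n, 0))) = (n:ℝ) := by
    intro n
    rw [hSe, Equiv.apply_symm_apply]
    show (n:ℝ) * α i₀ = (n:ℝ)
    rw [hi₀, mul_one]
  -- gaps are between 0 and 1
  have hgap_ge : ∀ j, 0 ≤ S (j+1) - S j := fun j => sub_nonneg.2 (hmono (Nat.le_succ j))
  have hgap_le : ∀ j, S (j+1) - S j ≤ 1 := by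
    intro j
    set n : ℕ+ := ⟨⌊S j⌋₊ + 1, Nat.succ_pos _⟩ with hn
    set j' := e.symm (Sum.inr (i₀, n, 0)) with hj'
    have hSj' : S j' = (⌊S j⌋₊:ℝ) + 1 := by
      rw [hint n]
      norm_cast
    have hlt : S j < S j' := by rw [hSj']; exact Nat.lt_floor_add_one _
    have hjj' : j < j' := by
      by_contra h
      push_neg at h
      exact absurd (hmono h) (not_le.2 hlt)
    have h2 : S (j+1) ≤ S j' := hmono hjj'
    have hfl : (⌊S j⌋₊ : ℝ) ≤ S j := Nat.floor_le (hS0 j)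
    rw [hSj'] at h2
    linarith
  -- sublevel sets of indices are finite
  have hfin : ∀ c : ℝ, {j : ℕ | S j ≤ c}.Finite := by
    intro c
    have heq : {j : ℕ | S j ≤ c} = e ⁻¹' {x | sval α x ≤ c} := by
      ext j; simp [hSe j]
    rw [heq]
    exact Set.Finite.preimage e.injective.injOn (finite_sval_le α hle c)
  -- frequently large gaps
  have hfreq : ∀ ε : ℝ, 0 < ε → ε ≤ 1/2 → ∃ᶠ j in atTop, 1 - ε ≤ S (j+1) - S j := by
    intro ε hε hε2
    rw [frequently_atTop]
    intro J
    set A : ℝ := (∑ i, α i) + 1 with hA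
    have hA1 : 1 ≤ A := by
      have : 0 ≤ ∑ i, α i := Finset.sum_nonneg fun i _ => le_trans zero_le_one (hle i)
      linarith
    have hAi : ∀ i, α i ≤ A := by
      intro i
      have h := Finset.single_le_sum (f := α) (fun i _ => le_trans zero_le_one (hle i))
        (Finset.mem_univ i)
      linarith
    set δ : ℝ := ε / (2*A) with hδdef
    have hδ : 0 < δ := by positivity
    have hδA : δ * A = ε / 2 := by
      rw [hδdef]; field_simp
    have hδsmall : δ ≤ 1/4 := by
      have h4 : δ * A ≤ 1/4 := by rw [hδA]; linarith
      nlinarith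
    obtain ⟨M, hM⟩ := exists_nat_gt (S J)
    obtain ⟨N, hMN, hN1, hDir⟩ := dirichlet (fun i => (α i)⁻¹) hδ M
    have hN1' : (1:ℝ) ≤ N := by exact_mod_cast hN1
    -- no value in (N + ε/2, N + 1 - ε/2)
    have key : ∀ x, sval α x ≤ (N:ℝ) + ε/2 ∨ (N:ℝ) + 1 - ε/2 ≤ sval α x := by
      rintro (i | ⟨i, m, t⟩)
      · left; show (0:ℝ) ≤ (N:ℝ) + ε/2; linarith
      · show ((m:ℝ) * α i ≤ (N:ℝ) + ε/2) ∨ ((N:ℝ) + 1 - ε/2 ≤ (m:ℝ) * α i)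
        obtain ⟨q, hq⟩ := hDir i
        have hαpos : (0:ℝ) < α i := lt_of_lt_of_le one_pos (hle i)
        have h1 : |(N:ℝ) - q * α i| ≤ δ * α i := by
          have heq : (N:ℝ) - q * α i = ((N:ℝ) * (α i)⁻¹ - q) * α i := by
            field_simp
          rw [heq, abs_mul, abs_of_pos hαpos]
          exact mul_le_mul_of_nonneg_right hq hαpos.le
        have h2 : |(N:ℝ) - q * α i| ≤ ε/2 := by
          refine h1.trans ?_
          rw [← hδA]
          exact mul_le_mul_of_nonneg_left (hAi i) hδ.le
        rw [abs_le] at h2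
        have hq0 : (0:ℤ) ≤ q := by
          by_contra h
          push_neg at h
          have hq1 : q ≤ -1 := by omega
          have : (q:ℝ) ≤ -1 := by exact_mod_cast hq1
          nlinarith
        rcases le_or_gt (m:ℤ) q with hmq | hmq
        · left
          have : (m:ℝ) ≤ (q:ℝ) := by exact_mod_cast hmq
          nlinarith
        · right
          have : (q:ℝ) + 1 ≤ (m:ℝ) := by exact_mod_cast Int.lt_iff_add_one_le.mp hmq
          nlinarith [hle i]
    -- the index where a large gap occurs
    have hcfin := hfin ((N:ℝ) + ε/2)
    set T := hcfin.toFinset with hT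
    set N' : ℕ+ := ⟨N, hN1⟩ with hN'
    have hvalN : S (e.symm (Sum.inr (i₀, N', 0))) = (N:ℝ) := by
      rw [hint N']
      norm_cast
    have hjN : e.symm (Sum.inr (i₀, N', 0)) ∈ T := by
      rw [hT, Set.Finite.mem_toFinset]
      show S _ ≤ (N:ℝ) + ε/2
      rw [hvalN]; linarith
    have hTne : T.Nonempty := ⟨_, hjN⟩
    set j := T.max' hTne with hj
    have hJidx : J < e.symm (Sum.inr (i₀, N', 0)) := by
      by_contra h
      push_neg at h
      have := hmono h
      rw [hvalN] at this
      have hMN' : (M:ℝ) ≤ (N:ℝ) := by exact_mod_cast hMN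
      linarith
    have hJj : J < j := lt_of_lt_of_le hJidx (T.le_max' _ hjN)
    refine ⟨j, hJj.le, ?_⟩
    have hSj : S j ≤ (N:ℝ) + ε/2 := by
      have h := T.max'_mem hTne
      simp only [hT, Set.Finite.mem_toFinset] at h
      exact h
    have hSj1 : ¬ (S (j+1) ≤ (N:ℝ) + ε/2) := by
      intro h
      have hmem : j + 1 ∈ T := by rw [hT, Set.Finite.mem_toFinset]; exact h
      have h2 := T.le_max' _ hmem
      rw [← hj] at h2
      omega
    push_neg at hSj1
    have hd : (N:ℝ) + 1 - ε/2 ≤ S (j+1) := by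
      rcases (hSe (j+1)) ▸ key (e (j+1)) with h | h
      · exact absurd h (not_le.2 hSj1)
      · exact h
    linarith
  -- conclude
  have hbdd : IsBoundedUnder (· ≤ ·) atTop (fun j => S (j+1) - S j) :=
    isBoundedUnder_of ⟨1, hgap_le⟩
  have hbdd' : IsBoundedUnder (· ≥ ·) atTop (fun j => S (j+1) - S j) :=
    isBoundedUnder_of ⟨0, hgap_ge⟩
  refine le_antisymm ?_ ?_
  · exact limsup_le_of_le hbdd'.isCoboundedUnder_le (Eventually.of_forall hgap_le)
  · refine le_of_forall_sub_le ?_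
    intro ε hε
    have hε' : 0 < min ε (1/2) := lt_min hε (by norm_num)
    have := le_limsup_of_frequently_le (hfreq (min ε (1/2)) hε' (min_le_right _ _)) hbdd
    have hm : 1 - ε ≤ 1 - min ε (1/2) := by
      have := min_le_left ε (1/2); linarith
    linarith
end
end

section
/- Let A and B be monotone increasing sequences of nonnegative reals tending to infinity, and suppose F : ℕ → ℕ is a bijection (viewed as mapping the j-th element of A to the F(j)-th element of B) such that A_j − B_{F(j)} → 0 as j → ∞. Then limsup_{j→∞}(A_{j+1} − A_j) = limsup_{j→∞}(B_{j+1} − B_j). -/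
open Filter Topology

noncomputable section

lemma key_lemma (A B : ℕ → ℝ) (hA : Monotone A) (hB : Monotone B)
    (F : ℕ ≃ ℕ) (ε : ℝ) (N : ℕ)
    (h : ∀ i, N ≤ i → |A i - B (F i)| < ε) :
    ∀ j, N ≤ j → A j ≤ B j + ε := by
  intro j hj
  by_contra hcon
  push_neg at hcon
  have himg : (Finset.range (j+1)).image F.symm ⊆ Finset.range j := by
    intro i hi
    simp only [Finset.mem_image, Finset.mem_range] at *
    obtain ⟨m, hm, rfl⟩ := hi
    by_cases hiN : N ≤ F.symm m
    · have h1 := h _ hiN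
      rw [Equiv.apply_symm_apply] at h1
      have h2 : B m ≤ B j := hB (Nat.lt_succ_iff.mp hm)
      have hlt : A (F.symm m) < A j := by
        have := abs_lt.mp h1
        linarith [this.1, this.2]
      by_contra hle; push_neg at hle
      exact absurd (hA hle) (not_le.mpr hlt)
    · omega
  have hcard := Finset.card_le_card himg
  rw [Finset.card_image_of_injective _ F.symm.injective, Finset.card_range,
    Finset.card_range] at hcard
  omega

lemma limsup_le_aux (u v : ℕ → ℝ) (hu : ∀ j, 0 ≤ u j)
    (hd : Tendsto (fun j => u j - v j) atTop (nhds 0)) :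
    limsup u atTop ≤ limsup v atTop := by
  have hd' : ∀ ε > (0:ℝ), ∃ N, ∀ n ≥ N, |u n - v n| < ε := by
    intro ε hε
    obtain ⟨N, hN⟩ := (Metric.tendsto_atTop.mp hd) ε hε
    exact ⟨N, fun n hn => by simpa [Real.dist_eq] using hN n hn⟩
  rw [limsup_eq, limsup_eq]
  by_cases hv : {a : ℝ | ∀ᶠ n in atTop, v n ≤ a}.Nonempty
  · have hbdd : BddBelow {a : ℝ | ∀ᶠ n in atTop, u n ≤ a} := by
      refine ⟨0, fun a ha => ?_⟩
      obtain ⟨n, hn⟩ := ha.exists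
      exact le_trans (hu n) hn
    apply le_csInf hv
    intro b hb
    refine le_of_forall_pos_le_add ?_
    intro ε hε
    apply csInf_le hbdd
    obtain ⟨N, hN⟩ := hd' ε hε
    simp only [Set.mem_setOf_eq] at hb ⊢
    filter_upwards [hb, eventually_ge_atTop N] with n h1 h2
    have := abs_lt.mp (hN n h2)
    linarith [this.1, this.2]
  · have hu' : ¬ {a : ℝ | ∀ᶠ n in atTop, u n ≤ a}.Nonempty := by
      rintro ⟨a, ha⟩
      apply hv
      obtain ⟨N, hN⟩ := hd' 1 one_pos
      refine ⟨a + 1, ?_⟩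
      filter_upwards [ha, eventually_ge_atTop N] with n h1 h2
      have := abs_lt.mp (hN n h2)
      linarith [this.1, this.2]
    rw [Set.not_nonempty_iff_eq_empty] at hv hu'
    rw [hv, hu']

theorem stmt3 (A B : ℕ → ℝ) (hA : Monotone A) (hB : Monotone B)
    (hA0 : ∀ j, 0 ≤ A j) (hB0 : ∀ j, 0 ≤ B j)
    (hAt : Tendsto A atTop atTop) (hBt : Tendsto B atTop atTop)
    (F : ℕ ≃ ℕ) (hF : Tendsto (fun j => A j - B (F j)) atTop (nhds 0)) :
    limsup (fun j => A (j + 1) - A j) atTop = limsup (fun j => B (j + 1) - B j) atTop := by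
  have hFsymm_top : Tendsto (F.symm : ℕ → ℕ) atTop atTop := by
    rw [← Nat.cofinite_eq_atTop]
    exact F.symm.injective.tendsto_cofinite
  have hF2 : Tendsto (fun j => B j - A (F.symm j)) atTop (nhds 0) := by
    have h1 : Tendsto (fun j => A (F.symm j) - B j) atTop (nhds 0) := by
      have := hF.comp hFsymm_top
      simp only [Function.comp_def, Equiv.apply_symm_apply] at this
      exact this
    have := h1.neg
    simpa [neg_sub] using this
  have hAB : Tendsto (fun j => A j - B j) atTop (nhds 0) := by
    rw [Metric.tendsto_atTop]
    intro ε hε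
    obtain ⟨N1, hN1⟩ := Metric.tendsto_atTop.mp hF (ε/2) (by linarith)
    obtain ⟨N2, hN2⟩ := Metric.tendsto_atTop.mp hF2 (ε/2) (by linarith)
    refine ⟨max N1 N2, fun n hn => ?_⟩
    have k1 := key_lemma A (fun j => B j) hA hB F (ε/2) N1
      (fun i hi => by simpa [Real.dist_eq] using hN1 i hi) n (le_trans (le_max_left _ _) hn)
    have k2 := key_lemma B A hB hA F.symm (ε/2) N2
      (fun i hi => by simpa [Real.dist_eq] using hN2 i hi) n (le_trans (le_max_right _ _) hn)
    rw [Real.dist_eq, sub_zero, abs_lt]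
    constructor <;> linarith
  have hgap : Tendsto (fun j => (A (j+1) - A j) - (B (j+1) - B j)) atTop (nhds 0) := by
    have h1 := hAB.comp (tendsto_add_atTop_nat 1)
    have h2 := h1.sub hAB
    simp only [Function.comp] at h2
    have heq : (fun j => (A (j+1) - A j) - (B (j+1) - B j))
        = fun j => (A (j+1) - B (j+1)) - (A j - B j) := by funext j; ring
    rw [heq]
    simpa using h2
  apply le_antisymm
  · exact limsup_le_aux _ _ (fun j => sub_nonneg.mpr (hA (Nat.le_succ j))) hgap
  · refine limsup_le_aux _ _ (fun j => sub_nonneg.mpr (hB (Nat.le_succ j))) ?_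
    have := hgap.neg
    simpa [neg_sub] using this
end
end

section
/- Let R = {α₁,…,α_k} with α₁ = 1 ≤ α₂ ≤ … ≤ α_k. For every ε > 0 there exist infinitely many positive reals t such that the open interval (t, t + 1 − ε) contains no element of S(R), i.e. contains no multiple of any αᵢ. -/
open Filter Topology

noncomputable section

set_option maxHeartbeats 1000000 in
theorem stmt5 {k : ℕ} (α : Fin k → ℝ) (hle : ∀ i, 1 ≤ α i) (h1 : ∃ i, α i = 1) :
    ∀ ε > 0, ∀ T : ℝ, ∃ t : ℝ, T < t ∧
      ∀ i (n : ℕ+), ((n : ℝ) * α i) ∉ Set.Ioo t (t + 1 - ε) := by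
  intro ε hε T
  rcases isEmpty_or_nonempty (Fin k) with hk | hk
  · exact ⟨T + 1, by linarith, fun i => (hk.false i).elim⟩
  have hαpos : ∀ i, (0:ℝ) < α i := fun i => lt_of_lt_of_le one_pos (hle i)
  set β : Fin k → ℝ := fun i => (α i)⁻¹ with hβdef
  have hβpos : ∀ i, 0 < β i := fun i => inv_pos.2 (hαpos i)
  obtain ⟨i₀, -, hi₀⟩ := Finset.exists_min_image Finset.univ β
    ⟨hk.some, Finset.mem_univ _⟩
  set δ : ℝ := ε / 2 * β i₀ with hδdef
  have hδ : 0 < δ := mul_pos (by linarith) (hβpos i₀)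
  obtain ⟨Q, hQ⟩ := exists_nat_gt (1 / δ)
  have hQ0 : 0 < (Q:ℝ) := lt_trans (by positivity) hQ
  have hQδ : 1 / (Q:ℝ) < δ := by
    rw [div_lt_iff₀ hQ0]
    have := (div_lt_iff₀ hδ).mp hQ
    nlinarith
  -- the box map
  have hbox : ∀ (N : ℕ) (i : Fin k), ⌊Int.fract ((N:ℝ) * β i) * Q⌋₊ < Q := by
    intro N i
    have h1' := Int.fract_lt_one ((N:ℝ) * β i)
    have h0 := Int.fract_nonneg ((N:ℝ) * β i)
    have : Int.fract ((N:ℝ) * β i) * Q < Q := by nlinarith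
    exact (Nat.floor_lt (by positivity)).mpr (by exact_mod_cast this)
  let g : ℕ → (Fin k → Fin Q) := fun N i => ⟨_, hbox N i⟩
  obtain ⟨b, hb⟩ := Finite.exists_infinite_fiber g
  have hbi : (g ⁻¹' {b}).Infinite := Set.infinite_coe_iff.mp hb
  obtain ⟨N₁, hN₁⟩ := hbi.nonempty
  obtain ⟨N₂, hN₂, hlt⟩ := hbi.exists_gt (N₁ + ⌈max T ε⌉₊)
  set M : ℕ := N₂ - N₁ with hMdef
  have hN₁₂ : N₁ ≤ N₂ := by omega
  have hMgt : ⌈max T ε⌉₊ < M := by omega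
  have hMgtR : (⌈max T ε⌉₊ : ℝ) < M := by exact_mod_cast hMgt
  have hmaxle : max T ε ≤ (⌈max T ε⌉₊ : ℝ) := Nat.le_ceil _
  have hMT : T < (M:ℝ) := lt_of_le_of_lt (le_trans (le_max_left T ε) hmaxle) hMgtR
  have hMε : ε < (M:ℝ) := lt_of_le_of_lt (le_trans (le_max_right T ε) hmaxle) hMgtR
  have key : ∀ i, ∃ n : ℕ+, |(n:ℝ) * α i - M| ≤ ε / 2 := by
    intro i
    have hsame : g N₁ i = g N₂ i := by
      rw [Set.mem_preimage, Set.mem_singleton_iff] at hN₁ hN₂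
      rw [hN₁, hN₂]
    have hfl : ⌊Int.fract ((N₁:ℝ) * β i) * Q⌋₊ = ⌊Int.fract ((N₂:ℝ) * β i) * Q⌋₊ :=
      congrArg Fin.val hsame
    set x₁ := Int.fract ((N₁:ℝ) * β i) with hx₁
    set x₂ := Int.fract ((N₂:ℝ) * β i) with hx₂
    have hx₁0 : 0 ≤ x₁ := Int.fract_nonneg _
    have hx₂0 : 0 ≤ x₂ := Int.fract_nonneg _
    have a1 : (⌊x₁ * Q⌋₊ : ℝ) ≤ x₁ * Q := Nat.floor_le (by positivity)
    have a2 : x₁ * Q < ⌊x₁ * Q⌋₊ + 1 := Nat.lt_floor_add_one _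
    have b1 : (⌊x₂ * Q⌋₊ : ℝ) ≤ x₂ * Q := Nat.floor_le (by positivity)
    have b2 : x₂ * Q < ⌊x₂ * Q⌋₊ + 1 := Nat.lt_floor_add_one _
    rw [hfl] at a1 a2
    have habs : |x₂ - x₁| < 1 / Q := by
      rw [abs_sub_lt_iff]
      constructor
      · rw [← sub_lt_iff_lt_add'] at b2
        rw [lt_div_iff₀ hQ0]; nlinarith
      · rw [lt_div_iff₀ hQ0]; nlinarith
    set c : ℤ := ⌊(N₂:ℝ) * β i⌋ - ⌊(N₁:ℝ) * β i⌋ with hcdef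
    have hMc : (M:ℝ) * β i - c = x₂ - x₁ := by
      rw [hx₁, hx₂, Int.fract, Int.fract, hcdef, hMdef]
      push_cast [Nat.cast_sub hN₁₂]
      ring
    have hcabs : |(M:ℝ) * β i - c| ≤ ε / 2 * β i := by
      rw [hMc]
      have hβi : β i₀ ≤ β i := hi₀ i (Finset.mem_univ i)
      have : δ ≤ ε / 2 * β i := by rw [hδdef]; nlinarith
      linarith [habs.le, hQδ.le]
    have hinv : β i * α i = 1 := inv_mul_cancel₀ (ne_of_gt (hαpos i))
    have hfinal : |(c:ℝ) * α i - M| ≤ ε / 2 := by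
      have : (c:ℝ) * α i - M = -(((M:ℝ) * β i - c) * α i) := by
        have h' : (M:ℝ) * β i * α i = M := by rw [mul_assoc, hinv, mul_one]
        rw [sub_mul, neg_sub, h']
      rw [this, abs_neg, abs_mul, abs_of_pos (hαpos i)]
      calc |(M:ℝ) * β i - c| * α i ≤ (ε / 2 * β i) * α i :=
            mul_le_mul_of_nonneg_right hcabs (hαpos i).le
        _ = ε / 2 := by rw [mul_assoc, hinv, mul_one]
    have hc : 0 < c := by
      by_contra h
      push_neg at h
      have hcR : (c:ℝ) ≤ 0 := by exact_mod_cast h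
      rw [abs_le] at hfinal
      have hmul : (c:ℝ) * α i ≤ 0 := mul_nonpos_iff.mpr (.inr ⟨hcR, (hαpos i).le⟩)
      linarith [hfinal.1]
    refine ⟨⟨c.toNat, by omega⟩, ?_⟩
    have : ((c.toNat : ℕ) : ℝ) = (c:ℝ) := by
      exact_mod_cast congrArg (Int.cast : ℤ → ℝ) (Int.toNat_of_nonneg hc.le)
    simpa [this] using hfinal
  choose n hn using key
  refine ⟨(M:ℝ) + ε / 2, by linarith, ?_⟩
  rintro i m ⟨hm1, hm2⟩
  have hni := hn i
  rw [abs_le] at hni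
  rcases le_or_gt (m:ℕ) (n i : ℕ) with h | h
  · have hmn : (m:ℝ) ≤ ((n i : ℕ+) : ℝ) := by exact_mod_cast h
    nlinarith [hαpos i, hni.1, hni.2]
  · have hmn : ((n i : ℕ+) : ℝ) + 1 ≤ (m:ℝ) := by exact_mod_cast h
    have hαi := hle i
    nlinarith [hαpos i, hni.1, hni.2]
end
end

section
/- Let A be a monotone increasing sequence of nonnegative reals and R a finite multiset of positive reals with smallest element 1, such that A_j − S(R)_j → 0 as j → ∞. Let N₀ be such that for every integer j > N₀ there are at least two elements of A within distance 1/10 of j, and let G₁(j), G₂(j) be the two elements of A closest to j. Then |G_i(j) − j| → 0 as j → ∞, for i = 1, 2. -/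
open Filter Topology

noncomputable section

theorem stmt8 {k : ℕ} (α : Fin k → ℝ) (hle : ∀ i, 1 ≤ α i) (h1 : ∃ i, α i = 1)
    (S A : ℕ → ℝ) (hS : IsSEnum α S) (hA : Monotone A) (hA0 : ∀ j, 0 ≤ A j)
    (hconv : Tendsto (fun j => A j - S j) atTop (nhds 0))
    (N₀ : ℕ) (G : ℕ → Fin 2 → ℕ)
    (hGne : ∀ j, N₀ < j → G j 0 ≠ G j 1)
    (hGclose : ∀ j, N₀ < j → ∀ i, |A (G j i) - (j : ℝ)| < 1 / 10)
    (hGmin : ∀ j, N₀ < j → ∀ m : ℕ, m ≠ G j 0 → m ≠ G j 1 →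
      ∀ i, |A (G j i) - (j : ℝ)| ≤ |A m - (j : ℝ)|) :
    ∀ i, Tendsto (fun j => |A (G j i) - (j : ℝ)|) atTop (nhds 0) := by
  obtain ⟨hmono, e, he⟩ := hS
  obtain ⟨i₀, hi₀⟩ := h1
  have hSval : ∀ (n : ℕ+) (b : Fin 2), S (e.symm (Sum.inr (i₀, n, b))) = (n : ℝ) := by
    intro n b
    rw [he, Equiv.apply_symm_apply]
    simp [sval, hi₀]
  have hlb : ∀ (n : ℕ+) (b : Fin 2), (n : ℕ) - 1 ≤ e.symm (Sum.inr (i₀, n, b)) := by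
    intro n b
    set m := e.symm (Sum.inr (i₀, n, b)) with hm
    have key : ∀ t, t < (n : ℕ) - 1 →
        e.symm (Sum.inr (i₀, ⟨t + 1, Nat.succ_pos t⟩, (0 : Fin 2))) < m := by
      intro t ht
      by_contra hc
      push_neg at hc
      have h2 := hmono hc
      have h2 := (hSval n b).symm.le.trans (h2.trans_eq (hSval ⟨t + 1, Nat.succ_pos t⟩ 0))
      have h3 : (n : ℕ) ≤ t + 1 := by exact_mod_cast h2
      omega
    have hsub : (Finset.range ((n : ℕ) - 1)).image
        (fun t => e.symm (Sum.inr (i₀, ⟨t + 1, Nat.succ_pos t⟩, (0 : Fin 2)))) ⊆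
        Finset.range m := by
      intro x hx
      simp only [Finset.mem_image, Finset.mem_range] at hx ⊢
      obtain ⟨t, ht, rfl⟩ := hx
      exact key t ht
    have hinj : Set.InjOn
        (fun t => (e.symm (Sum.inr (i₀, ⟨t + 1, Nat.succ_pos t⟩, (0 : Fin 2))) : ℕ))
        (Finset.range ((n : ℕ) - 1)) := by
      intro a _ b _ hab
      have := e.symm.injective hab
      simp only [Sum.inr.injEq, Prod.mk.injEq] at this
      have := congrArg Prod.fst this.2
      have : a + 1 = b + 1 := congrArg Subtype.val this
      omega
    have := Finset.card_le_card hsub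
    rw [Finset.card_image_of_injOn hinj, Finset.card_range, Finset.card_range] at this
    exact this
  intro i
  rw [Metric.tendsto_atTop]
  intro ε hε
  obtain ⟨N, hN⟩ := Metric.tendsto_atTop.mp hconv ε hε
  refine ⟨max (N₀ + 1) (N + 2), fun j hj => ?_⟩
  rw [ge_iff_le, max_le_iff] at hj
  have hjN₀ : N₀ < j := by omega
  have hjpos : 0 < j := by omega
  set jp : ℕ+ := ⟨j, hjpos⟩ with hjp
  set m₀ := e.symm (Sum.inr (i₀, jp, (0 : Fin 2))) with hm₀
  set m₁ := e.symm (Sum.inr (i₀, jp, (1 : Fin 2))) with hm₁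
  have hne : m₀ ≠ m₁ := by
    intro h
    have := e.symm.injective h
    simp at this
  have hS0 : S m₀ = (j : ℝ) := by rw [hSval]; norm_cast
  have hS1 : S m₁ = (j : ℝ) := by rw [hSval]; norm_cast
  have hjpn : (jp : ℕ) = j := rfl
  have hm₀N : N ≤ m₀ := by have := hlb jp 0; omega
  have hm₁N : N ≤ m₁ := by have := hlb jp 1; omega
  have hA0' : |A m₀ - (j : ℝ)| < ε := by
    have := hN m₀ hm₀N
    rw [Real.dist_eq, sub_zero, hS0] at this
    exact this
  have hA1' : |A m₁ - (j : ℝ)| < ε := by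
    have := hN m₁ hm₁N
    rw [Real.dist_eq, sub_zero, hS1] at this
    exact this
  have goal : |A (G j i) - (j : ℝ)| < ε := by
    by_cases h0 : m₀ ≠ G j 0 ∧ m₀ ≠ G j 1
    · exact lt_of_le_of_lt (hGmin j hjN₀ m₀ h0.1 h0.2 i) hA0'
    by_cases h1' : m₁ ≠ G j 0 ∧ m₁ ≠ G j 1
    · exact lt_of_le_of_lt (hGmin j hjN₀ m₁ h1'.1 h1'.2 i) hA1'
    have hne' := hGne j hjN₀
    have hi : G j i = G j 0 ∨ G j i = G j 1 := by fin_cases i <;> simp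
    have hcase : G j i = m₀ ∨ G j i = m₁ := by
      push_neg at h0 h1'
      by_cases hc0 : m₀ = G j 0 <;> by_cases hc1 : m₁ = G j 0 <;>
        by_cases hc0' : m₀ = G j 1 <;> by_cases hc1' : m₁ = G j 1 <;> omega
    rcases hcase with h | h
    · rw [h]; exact hA0'
    · rw [h]; exact hA1'
  rw [Real.dist_eq, sub_zero, abs_abs]
  exact goal
end
end

section
/- Let R be a finite multiset of positive reals containing 1 as its smallest element, let R̂ be R with one copy of 1 removed, and let A be a countable multiset of nonnegative reals admitting a close almost-bijection F : S(R) → A. Define Â = A with the two elements closest to each integer j > N₀ removed (for suitable large N₀). If Â is infinite, then there exists a close almost-bijection F̂ : S(R̂) → Â. -/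
open Filter Topology

noncomputable section

open Function Set

namespace Stmt9Aux

lemma fin2_cases (i : Fin 2) : i = 0 ∨ i = 1 := by
  fin_cases i
  · exact Or.inl rfl
  · exact Or.inr rfl

lemma one_le_abs_natCast_sub {a b : ℕ} (h : a ≠ b) : (1:ℝ) ≤ |(a:ℝ) - (b:ℝ)| := by
  have h' : (1:ℤ) ≤ |(a:ℤ) - (b:ℤ)| := Int.one_le_abs (by omega)
  have : ((1:ℤ):ℝ) ≤ ((|(a:ℤ) - (b:ℤ)| : ℤ):ℝ) := by exact_mod_cast h'
  rw [Int.cast_abs] at this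
  push_cast at this
  simpa using this

lemma swap_mem {V : Set ℕ} {p q x : ℕ} (hp : p ∈ V) (hq : q ∈ V) (hx : x ∈ V) :
    Equiv.swap p q x ∈ V := by
  rcases eq_or_ne x p with rfl | hxp
  · rwa [Equiv.swap_apply_left]
  rcases eq_or_ne x q with rfl | hxq
  · rwa [Equiv.swap_apply_right]
  rwa [Equiv.swap_apply_of_ne_of_ne hxp hxq]

/-- a permutation sending `a ↦ g0`, `b ↦ g1`, supported on `{a,b,g0,g1}`. -/
def pn (a b g0 g1 : ℕ) : Equiv.Perm ℕ :=
  (Equiv.swap a g0).trans (Equiv.swap (Equiv.swap a g0 b) g1)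

variable {a b g0 g1 x : ℕ}

lemma pn_apply_a (hab : a ≠ b) (hg : g0 ≠ g1) : pn a b g0 g1 a = g0 := by
  have h1 : g0 ≠ Equiv.swap a g0 b := by
    intro h
    have h2 : Equiv.swap a g0 a = Equiv.swap a g0 b := by rw [Equiv.swap_apply_left]; exact h
    exact hab ((Equiv.swap a g0).injective h2)
  simp only [pn, Equiv.trans_apply, Equiv.swap_apply_left]
  exact Equiv.swap_apply_of_ne_of_ne h1 hg

lemma pn_apply_b : pn a b g0 g1 b = g1 := by
  simp only [pn, Equiv.trans_apply, Equiv.swap_apply_left]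

lemma pn_mem {V : Set ℕ} (ha : a ∈ V) (hb : b ∈ V) (hg0 : g0 ∈ V) (hg1 : g1 ∈ V)
    (hx : x ∈ V) : pn a b g0 g1 x ∈ V :=
  swap_mem (swap_mem ha hg0 hb) hg1 (swap_mem ha hg0 hx)

lemma pn_symm_mem {V : Set ℕ} (ha : a ∈ V) (hb : b ∈ V) (hg0 : g0 ∈ V) (hg1 : g1 ∈ V)
    (hx : x ∈ V) : (pn a b g0 g1).symm x ∈ V := by
  simp only [pn, Equiv.symm_trans_apply, Equiv.symm_swap]
  exact swap_mem ha hg0 (swap_mem (swap_mem ha hg0 hb) hg1 hx)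

lemma pn_fix (ha : x ≠ a) (hb : x ≠ b) (hg0 : x ≠ g0) (hg1 : x ≠ g1) :
    pn a b g0 g1 x = x := by
  have hτ : Equiv.swap a g0 x = x := Equiv.swap_apply_of_ne_of_ne ha hg0
  have hτb : x ≠ Equiv.swap a g0 b := by
    intro h
    have h2 : Equiv.swap a g0 x = b := by rw [h, Equiv.swap_apply_self]
    exact hb (hτ.symm.trans h2)
  simp only [pn, Equiv.trans_apply, hτ]
  exact Equiv.swap_apply_of_ne_of_ne hτb hg1

lemma pn_preim (hab : a ≠ b) (hg : g0 ≠ g1)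
    (hx : pn a b g0 g1 x = g0 ∨ pn a b g0 g1 x = g1) : x = a ∨ x = b := by
  rcases hx with h | h
  · exact Or.inl ((pn a b g0 g1).injective (h.trans (pn_apply_a hab hg).symm))
  · exact Or.inr ((pn a b g0 g1).injective (h.trans (pn_apply_b (a := a) (g0 := g0)).symm))

open scoped Classical in
/-- Glue a family of permutations with disjoint supports into one function. -/
noncomputable def glue (Good : ℕ+ → Prop) (V : ℕ+ → Set ℕ) (π : ℕ+ → Equiv.Perm ℕ)
    (m : ℕ) : ℕ :=
  if h : ∃ n, Good n ∧ m ∈ V n then π h.choose m else m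

lemma glue_eq {Good : ℕ+ → Prop} {V : ℕ+ → Set ℕ} {π : ℕ+ → Equiv.Perm ℕ}
    (hdis : ∀ ⦃n n'⦄, Good n → Good n' → ∀ ⦃m⦄, m ∈ V n → m ∈ V n' → n = n')
    {n : ℕ+} {m : ℕ} (hn : Good n) (hm : m ∈ V n) : glue Good V π m = π n m := by
  have h : ∃ n, Good n ∧ m ∈ V n := ⟨n, hn, hm⟩
  classical
  rw [glue]
  rw [dif_pos h]
  obtain ⟨hg, hmem⟩ := h.choose_spec
  rw [hdis hg hn hmem hm]

lemma glue_eq' {Good : ℕ+ → Prop} {V : ℕ+ → Set ℕ} {π : ℕ+ → Equiv.Perm ℕ}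
    {m : ℕ} (h : ¬ ∃ n, Good n ∧ m ∈ V n) : glue Good V π m = m := by
  rw [glue, dif_neg h]


section Core

/-- The combinatorial core: rerouting a close almost-bijection after removing the two
copies of the integers on the source side and the two nearest-to-integer elements on the
target side. -/
theorem core
    (CloseSeq : (ℕ → ℝ) → (ℕ → ℝ) → (ℕ → ℕ) → Prop)
    (hCS : ∀ S A F, CloseSeq S A F ↔ ∀ ε > 0, {j : ℕ | ε ≤ |A (F j) - S j|}.Finite)
    (AlmostBij : (ℕ → ℕ) → Prop)
    (hAB : ∀ F, AlmostBij F ↔ {n : ℕ | ¬ ∃! j : ℕ, F j = n}.Finite)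
    (S A : ℕ → ℝ) (F u : ℕ → ℕ) (rr : ℕ+ → Fin 2 → ℕ)
    (hclose : CloseSeq S A F) (hab : AlmostBij F)
    (Sfin : ∀ C : ℝ, {j : ℕ | S j ≤ C}.Finite)
    (hu : Function.Injective u)
    (hrrinj : ∀ {n t n' t'}, rr n t = rr n' t' → n = n' ∧ t = t')
    (hSrr : ∀ n t, S (rr n t) = (n : ℝ))
    (hdisj : ∀ j n t, u j ≠ rr n t)
    (hcompl : {p : ℕ | (∀ j, u j ≠ p) ∧ ∀ n t, p ≠ rr n t}.Finite)
    (N₀ : ℕ) (G : ℕ → Fin 2 → ℕ)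
    (hGne : ∀ j, N₀ < j → G j 0 ≠ G j 1)
    (hGmin : ∀ j, N₀ < j → ∀ m : ℕ, m ≠ G j 0 → m ≠ G j 1 →
      ∀ i, |A (G j i) - (j : ℝ)| ≤ |A m - (j : ℝ)|)
    (e : ℕ → ℕ) (he : Function.Injective e)
    (hrange : Set.range e = {m : ℕ | ∀ j, N₀ < j → ∀ i, m ≠ G j i}) :
    ∃ Fhat : ℕ → ℕ, CloseSeq (fun j => S (u j)) (fun j => A (e j)) Fhat ∧ AlmostBij Fhat := by
  classical
  rw [hCS] at hclose
  rw [hAB] at hab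
  -- fibers of F are finite
  have Ffib : ∀ m : ℕ, {p : ℕ | F p = m}.Finite := by
    intro m
    refine ((hclose 1 one_pos).union (Sfin (A m + 1))).subset ?_
    intro p hp
    simp only [Set.mem_setOf_eq] at hp
    by_cases hB : 1 ≤ |A (F p) - S p|
    · exact Or.inl hB
    · push_neg at hB
      rw [hp, abs_lt] at hB
      exact Or.inr (by simp only [Set.mem_union, Set.mem_setOf_eq]; linarith [hB.1])
  have hXin : ∀ p q : ℕ, p ≠ q → F p = F q → ¬ ∃! r : ℕ, F r = F p := by
    rintro p q hpq hFeq ⟨r, _, hur⟩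
    exact hpq ((hur p rfl).trans (hur q hFeq.symm).symm)
  -- deviations of the images of the two integer points
  set d : ℕ+ → ℝ := fun n => max |A (F (rr n 0)) - (n:ℝ)| |A (F (rr n 1)) - (n:ℝ)| with hd
  have hFd : ∀ (n : ℕ+) (t : Fin 2), |A (F (rr n t)) - (n:ℝ)| ≤ d n := by
    intro n t
    rcases fin2_cases t with rfl | rfl
    · exact le_max_left _ _
    · exact le_max_right _ _
  have dfin : ∀ ε : ℝ, 0 < ε → {n : ℕ+ | ε ≤ d n}.Finite := by
    intro ε hε
    have hC := hclose ε hε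
    have key : ∀ t : Fin 2, {n : ℕ+ | ε ≤ |A (F (rr n t)) - (n:ℝ)|}.Finite := by
      intro t
      refine (hC.preimage (f := fun n : ℕ+ => rr n t)
        (fun x _ y _ h => (hrrinj h).1)).subset ?_
      intro n hn
      simp only [Set.mem_preimage, Set.mem_setOf_eq, hSrr]
      exact hn
    refine ((key 0).union (key 1)).subset ?_
    intro n hn
    simp only [Set.mem_setOf_eq, hd] at hn
    exact le_max_iff.mp hn
  -- the supports
  set V : ℕ+ → Set ℕ :=
    fun n => {F (rr n 0), F (rr n 1), G (n:ℕ) 0, G (n:ℕ) 1} with hV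
  have Vfin : ∀ n, (V n).Finite := by
    intro n
    exact (((Set.finite_singleton _).insert _).insert _).insert _
  have VmemA : ∀ n, F (rr n 0) ∈ V n := fun n => Set.mem_insert _ _
  have VmemB : ∀ n, F (rr n 1) ∈ V n := by intro n; simp [hV]
  have VmemG : ∀ n (i : Fin 2), G (n:ℕ) i ∈ V n := by
    intro n i
    rcases fin2_cases i with rfl | rfl <;> simp [hV]
  set Good : ℕ+ → Prop :=
    fun n => N₀ < (n:ℕ) ∧ d n < 1/2 ∧ F (rr n 0) ≠ F (rr n 1) with hGoodDef
  have hVd : ∀ n, Good n → ∀ m ∈ V n, |A m - (n:ℝ)| ≤ d n := by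
    intro n hn m hm
    have hN : N₀ < (n:ℕ) := hn.1
    have hab' : F (rr n 0) ≠ F (rr n 1) := hn.2.2
    have hG : ∀ i : Fin 2, |A (G (n:ℕ) i) - (n:ℝ)| ≤ d n := by
      intro i
      by_cases h0a : G (n:ℕ) i = F (rr n 0)
      · rw [h0a]; exact hFd n 0
      by_cases h0b : G (n:ℕ) i = F (rr n 1)
      · rw [h0b]; exact hFd n 1
      rcases fin2_cases i with rfl | rfl
      · by_cases ha1 : F (rr n 0) = G (n:ℕ) 1
        · have hb0 : F (rr n 1) ≠ G (n:ℕ) 0 := fun h => h0b h.symm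
          have hb1 : F (rr n 1) ≠ G (n:ℕ) 1 := fun h => hab' (ha1.trans h.symm)
          exact le_trans (hGmin _ hN _ hb0 hb1 0) (hFd n 1)
        · have ha0 : F (rr n 0) ≠ G (n:ℕ) 0 := fun h => h0a h.symm
          exact le_trans (hGmin _ hN _ ha0 ha1 0) (hFd n 0)
      · by_cases ha0 : F (rr n 0) = G (n:ℕ) 0
        · have hb0 : F (rr n 1) ≠ G (n:ℕ) 0 := fun h => hab' (ha0.trans h.symm)
          have hb1 : F (rr n 1) ≠ G (n:ℕ) 1 := fun h => h0b h.symm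
          exact le_trans (hGmin _ hN _ hb0 hb1 1) (hFd n 1)
        · have ha1 : F (rr n 0) ≠ G (n:ℕ) 1 := fun h => h0a h.symm
          exact le_trans (hGmin _ hN _ ha0 ha1 1) (hFd n 0)
    simp only [hV, Set.mem_insert_iff, Set.mem_singleton_iff] at hm
    rcases hm with rfl | rfl | rfl | rfl
    · exact hFd n 0
    · exact hFd n 1
    · exact hG 0
    · exact hG 1
  have hVhalf : ∀ n, Good n → ∀ m ∈ V n, |A m - (n:ℝ)| < 1/2 :=
    fun n hn m hm => lt_of_le_of_lt (hVd n hn m hm) hn.2.1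
  have hVdis : ∀ ⦃n n'⦄, Good n → Good n' → ∀ ⦃m⦄, m ∈ V n → m ∈ V n' → n = n' := by
    intro n n' hn hn' m hm hm'
    by_contra hne
    have h1 := hVhalf n hn m hm
    have h2 := hVhalf n' hn' m hm'
    have h3 := one_le_abs_natCast_sub (a := (n:ℕ)) (b := ((n':ℕ+):ℕ))
      (fun h => hne (PNat.coe_injective h))
    have htri := abs_sub_le ((n:ℕ):ℝ) (A m) (((n':ℕ+):ℕ):ℝ)
    rw [abs_sub_comm ((n:ℕ):ℝ) (A m)] at htri
    linarith
  -- the permutations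
  set π : ℕ+ → Equiv.Perm ℕ :=
    fun n => pn (F (rr n 0)) (F (rr n 1)) (G (n:ℕ) 0) (G (n:ℕ) 1) with hπ
  have hπmem : ∀ n, Good n → ∀ m ∈ V n, π n m ∈ V n := by
    intro n _ m hm
    exact pn_mem (VmemA n) (VmemB n) (VmemG n 0) (VmemG n 1) hm
  have hπsymmem : ∀ n, Good n → ∀ m ∈ V n, (π n).symm m ∈ V n := by
    intro n _ m hm
    exact pn_symm_mem (VmemA n) (VmemB n) (VmemG n 0) (VmemG n 1) hm
  have hπa : ∀ n, Good n → π n (F (rr n 0)) = G (n:ℕ) 0 :=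
    fun n hn => pn_apply_a hn.2.2 (hGne _ hn.1)
  have hπb : ∀ n, π n (F (rr n 1)) = G (n:ℕ) 1 := fun n => pn_apply_b
  have hπpre : ∀ n, Good n → ∀ x, (π n x = G (n:ℕ) 0 ∨ π n x = G (n:ℕ) 1) →
      x = F (rr n 0) ∨ x = F (rr n 1) :=
    fun n hn x hx => pn_preim hn.2.2 (hGne _ hn.1) hx
  -- glue into a global bijection
  set P : ℕ → ℕ := glue Good V π with hP
  set Q : ℕ → ℕ := glue Good V (fun n => (π n).symm) with hQ
  have hPeq : ∀ {n m}, Good n → m ∈ V n → P m = π n m := by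
    intro n m hn hm; rw [hP]; exact glue_eq hVdis hn hm
  have hQeq : ∀ {n m}, Good n → m ∈ V n → Q m = (π n).symm m := by
    intro n m hn hm; rw [hQ]; exact glue_eq hVdis hn hm
  have hPid : ∀ {m}, (¬ ∃ n, Good n ∧ m ∈ V n) → P m = m := by
    intro m h; rw [hP]; exact glue_eq' h
  have hQid : ∀ {m}, (¬ ∃ n, Good n ∧ m ∈ V n) → Q m = m := by
    intro m h; rw [hQ]; exact glue_eq' h
  have hQP : ∀ m, Q (P m) = m := by
    intro m
    by_cases h : ∃ n, Good n ∧ m ∈ V n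
    · obtain ⟨n, hn, hm⟩ := h
      rw [hPeq hn hm, hQeq hn (hπmem n hn m hm), Equiv.symm_apply_apply]
    · rw [hPid h, hQid h]
  have hPQ : ∀ m, P (Q m) = m := by
    intro m
    by_cases h : ∃ n, Good n ∧ m ∈ V n
    · obtain ⟨n, hn, hm⟩ := h
      rw [hQeq hn hm, hPeq hn (hπsymmem n hn m hm), Equiv.apply_symm_apply]
    · rw [hQid h, hPid h]
  have hPiff : ∀ x v, P x = v ↔ x = Q v := by
    intro x v
    constructor
    · intro h; rw [← h, hQP]
    · intro h; rw [h, hPQ]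
  have hQinj : Function.Injective Q := Function.LeftInverse.injective hPQ
  -- properties of the rerouted map F' = P ∘ F
  have hF'fib : ∀ v : ℕ, {p : ℕ | P (F p) = v}.Finite := by
    intro v
    refine (Ffib (Q v)).subset ?_
    intro p hp
    exact (hPiff _ _).mp hp
  have hX'fin : {v : ℕ | ¬ ∃! p : ℕ, P (F p) = v}.Finite := by
    refine (hab.preimage (f := Q) hQinj.injOn).subset ?_
    intro v hv
    simp only [Set.mem_setOf_eq] at hv
    simp only [Set.mem_preimage, Set.mem_setOf_eq]
    intro h
    exact hv ((existsUnique_congr (fun p => (hPiff (F p) v))).mpr h)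
  -- closeness of the rerouted map
  have hcloseF' : ∀ ε : ℝ, 0 < ε → {p : ℕ | ε ≤ |A (P (F p)) - S p|}.Finite := by
    intro ε hε
    have hNbad : {n : ℕ+ | ε/4 ≤ d n}.Finite := dfin _ (by linarith)
    have hbig : {p : ℕ | ∃ n, Good n ∧ F p ∈ V n ∧ ε/4 ≤ d n}.Finite := by
      refine (Set.Finite.biUnion hNbad fun n _ =>
        Set.Finite.biUnion (Vfin n) fun v _ => Ffib v).subset ?_
      rintro p ⟨n, _, hFp, hdn⟩
      simp only [Set.mem_iUnion]
      exact ⟨n, hdn, F p, hFp, rfl⟩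
    refine ((hclose (ε/2) (by linarith)).union hbig).subset ?_
    intro p hp
    simp only [Set.mem_setOf_eq] at hp
    by_cases h : ∃ n, Good n ∧ F p ∈ V n
    · obtain ⟨n, hn, hm⟩ := h
      rw [hPeq hn hm] at hp
      have h1 : |A (π n (F p)) - ((n:ℕ):ℝ)| ≤ d n := hVd n hn _ (hπmem n hn _ hm)
      have h2 : |A (F p) - ((n:ℕ):ℝ)| ≤ d n := hVd n hn _ hm
      by_cases hc : ε/2 ≤ |A (F p) - S p|
      · exact Or.inl hc
      · push_neg at hc
        right
        refine ⟨n, hn, hm, ?_⟩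
        have h3 := abs_sub_le (A (π n (F p))) (((n:ℕ)):ℝ) (A (F p))
        have h4 := abs_sub_le (A (π n (F p))) (A (F p)) (S p)
        rw [abs_sub_comm (((n:ℕ)):ℝ) (A (F p))] at h3
        linarith
    · rw [hPid h] at hp
      exact Or.inl (le_trans (by linarith) hp)
  have hF'rr0 : ∀ n, Good n → P (F (rr n 0)) = G (n:ℕ) 0 :=
    fun n hn => (hPeq hn (VmemA n)).trans (hπa n hn)
  have hF'rr1 : ∀ n, Good n → P (F (rr n 1)) = G (n:ℕ) 1 :=
    fun n hn => (hPeq hn (VmemB n)).trans (hπb n)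
  have hF'G : ∀ n, Good n → ∀ p, (P (F p) = G (n:ℕ) 0 ∨ P (F p) = G (n:ℕ) 1) →
      F p = F (rr n 0) ∨ F p = F (rr n 1) := by
    intro n hn p hp
    by_cases h : ∃ n', Good n' ∧ F p ∈ V n'
    · obtain ⟨n', hn', hm⟩ := h
      rw [hPeq hn' hm] at hp
      have hmem : π n' (F p) ∈ V n' := hπmem n' hn' _ hm
      have hGmem : π n' (F p) ∈ V n := by
        rcases hp with h' | h'
        · rw [h']; exact VmemG n 0
        · rw [h']; exact VmemG n 1
      have hnn : n' = n := hVdis hn' hn hmem hGmem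
      subst hnn
      exact hπpre n' hn' _ hp
    · exfalso
      rw [hPid h] at hp
      refine h ⟨n, hn, ?_⟩
      rcases hp with h' | h'
      · rw [h']; exact VmemG n 0
      · rw [h']; exact VmemG n 1
  -- the bad set of positive integers
  have BadNfin : {n : ℕ+ | ¬ Good n}.Finite := by
    have s1 : {n : ℕ+ | ¬ N₀ < (n:ℕ)}.Finite := by
      refine (((Set.finite_Iic N₀).preimage (f := fun n : ℕ+ => (n:ℕ))
        (fun x _ y _ h => PNat.coe_injective h))).subset ?_
      intro n hn
      simp only [Set.mem_setOf_eq, not_lt] at hn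
      exact hn
    have s2 : {n : ℕ+ | ¬ d n < 1/2}.Finite := by
      refine (dfin (1/2) (by norm_num)).subset ?_
      intro n hn
      simp only [Set.mem_setOf_eq, not_lt] at hn
      exact hn
    have s3 : {n : ℕ+ | N₀ < (n:ℕ) ∧ d n < 1/2 ∧ F (rr n 0) = F (rr n 1)}.Finite := by
      refine Set.Finite.of_finite_image (f := fun n => F (rr n 0)) (hab.subset ?_) ?_
      · rintro v ⟨n, ⟨hN, hdn, hcol⟩, rfl⟩
        simp only [Set.mem_setOf_eq]
        exact hXin (rr n 0) (rr n 1)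
          (fun h => (by decide : (0 : Fin 2) ≠ 1) (hrrinj h).2) hcol
      · intro n hn n' hn' hvv
        simp only [Set.mem_setOf_eq] at hn hn'
        have h1 : |A (F (rr n 0)) - ((n:ℕ):ℝ)| < 1/2 := lt_of_le_of_lt (hFd n 0) hn.2.1
        have h2 : |A (F (rr n' 0)) - (((n':ℕ+):ℕ):ℝ)| < 1/2 := lt_of_le_of_lt (hFd n' 0) hn'.2.1
        have hvv' : F (rr n 0) = F (rr n' 0) := hvv
        rw [hvv'] at h1
        by_contra hne
        have h3 := one_le_abs_natCast_sub (a := (n:ℕ)) (b := ((n':ℕ+):ℕ))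
          (fun h => hne (PNat.coe_injective h))
        have htri := abs_sub_le ((n:ℕ):ℝ) (A (F (rr n' 0))) (((n':ℕ+):ℕ):ℝ)
        rw [abs_sub_comm ((n:ℕ):ℝ) (A (F (rr n' 0)))] at htri
        linarith
    refine ((s1.union s2).union s3).subset ?_
    intro n hn
    simp only [Set.mem_union, Set.mem_setOf_eq]
    by_cases hN : N₀ < (n:ℕ)
    · by_cases hdn : d n < 1/2
      · refine Or.inr ⟨hN, hdn, ?_⟩
        by_contra hc
        exact hn ⟨hN, hdn, hc⟩
      · exact Or.inl (Or.inr hdn)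
    · exact Or.inl (Or.inl hN)
  -- preliminary finite sets for the final construction
  have hXpre : {j : ℕ | ¬ ∃! r : ℕ, F r = F (u j)}.Finite := by
    have h1 : {p : ℕ | ¬ ∃! r : ℕ, F r = F p}.Finite := by
      refine (Set.Finite.biUnion hab (fun v _ => Ffib v)).subset ?_
      intro p hp
      simp only [Set.mem_iUnion]
      exact ⟨F p, hp, rfl⟩
    have h2 : (u ⁻¹' {p : ℕ | ¬ ∃! r : ℕ, F r = F p}).Finite := h1.preimage hu.injOn
    exact h2.subset (fun j hj => hj)
  have hnotin : ∀ m : ℕ, m ∉ Set.range e → ∃ jn, N₀ < jn ∧ ∃ i, m = G jn i := by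
    intro m hm
    rw [hrange] at hm
    simp only [Set.mem_setOf_eq] at hm
    push_neg at hm
    exact hm
  have heinv : ∀ i, Function.invFun e (e i) = i := Function.leftInverse_invFun he
  -- the set of sources whose rerouted image was removed is finite
  have Jbadfin : {j : ℕ | P (F (u j)) ∉ Set.range e}.Finite := by
    have hb1 : {j : ℕ | ∃ n : ℕ+, ¬ Good n ∧
        (P (F (u j)) = G (n:ℕ) 0 ∨ P (F (u j)) = G (n:ℕ) 1)}.Finite := by
      refine (Set.Finite.biUnion BadNfin (fun n _ =>
        ((hF'fib (G (n:ℕ) 0)).preimage hu.injOn).union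
        ((hF'fib (G (n:ℕ) 1)).preimage hu.injOn))).subset ?_
      rintro j ⟨n, hn, hor⟩
      simp only [Set.mem_iUnion, Set.mem_union, Set.mem_preimage, Set.mem_setOf_eq]
      exact ⟨n, hn, hor⟩
    refine (hXpre.union hb1).subset ?_
    intro j hj
    simp only [Set.mem_setOf_eq] at hj
    obtain ⟨jn, hjn, i, hi⟩ := hnotin _ hj
    have hpos : 0 < jn := lt_of_le_of_lt (Nat.zero_le N₀) hjn
    have hor : P (F (u j)) = G ((((⟨jn, hpos⟩ : ℕ+)):ℕ)) 0 ∨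
        P (F (u j)) = G ((((⟨jn, hpos⟩ : ℕ+)):ℕ)) 1 := by
      rcases fin2_cases i with rfl | rfl
      · exact Or.inl hi
      · exact Or.inr hi
    by_cases hg : Good ⟨jn, hpos⟩
    · left
      simp only [Set.mem_setOf_eq]
      rcases hF'G _ hg (u j) hor with h | h
      · exact hXin (u j) (rr ⟨jn, hpos⟩ 0) (hdisj j _ _) h
      · exact hXin (u j) (rr ⟨jn, hpos⟩ 1) (hdisj j _ _) h
    · right
      exact ⟨⟨jn, hpos⟩, hg, hor⟩
  -- the final map
  refine ⟨fun j => Function.invFun e (P (F (u j))), ?_, ?_⟩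
  · -- closeness
    rw [hCS]
    intro ε hε
    have hpre : (u ⁻¹' {p : ℕ | ε ≤ |A (P (F p)) - S p|}).Finite :=
      (hcloseF' ε hε).preimage hu.injOn
    refine (Jbadfin.union hpre).subset ?_
    intro j hj
    simp only [Set.mem_setOf_eq] at hj
    by_cases hb : P (F (u j)) ∈ Set.range e
    · right
      obtain ⟨i, hi⟩ := hb
      have h1 : e (Function.invFun e (P (F (u j)))) = P (F (u j)) := by
        rw [← hi, heinv]
      simp only [Set.mem_preimage, Set.mem_setOf_eq]
      rwa [h1] at hj
    · exact Or.inl hb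
  · -- almost bijectivity
    rw [hAB]
    have hY1 : ((fun j => Function.invFun e (P (F (u j)))) ''
        {j : ℕ | P (F (u j)) ∉ Set.range e}).Finite := Jbadfin.image _
    have hY2 : (e ⁻¹' {v : ℕ | ¬ ∃! p : ℕ, P (F p) = v}).Finite :=
      hX'fin.preimage he.injOn
    have hY3 : ((fun p => Function.invFun e (P (F p))) ''
        {p : ℕ | (∀ j, u j ≠ p) ∧ ∀ n t, p ≠ rr n t}).Finite := hcompl.image _
    have hY4 : {m : ℕ | ∃ n : ℕ+, ¬ Good n ∧ ∃ t : Fin 2, e m = P (F (rr n t))}.Finite := by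
      refine (Set.Finite.biUnion BadNfin (fun n _ =>
        (Set.finite_singleton (Function.invFun e (P (F (rr n 0))))).union
        (Set.finite_singleton (Function.invFun e (P (F (rr n 1))))))).subset ?_
      rintro m ⟨n, hn, t, ht⟩
      simp only [Set.mem_iUnion, Set.mem_union, Set.mem_singleton_iff]
      refine ⟨n, hn, ?_⟩
      rcases fin2_cases t with rfl | rfl
      · exact Or.inl (by rw [← ht, heinv])
      · exact Or.inr (by rw [← ht, heinv])
    refine (((hY1.union hY2).union hY3).union hY4).subset ?_
    intro m hm
    simp only [Set.mem_setOf_eq] at hm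
    by_cases hY1m : m ∈ (fun j => Function.invFun e (P (F (u j)))) ''
        {j : ℕ | P (F (u j)) ∉ Set.range e}
    · exact Or.inl (Or.inl (Or.inl hY1m))
    by_cases h2 : ∃! p : ℕ, P (F p) = e m
    · obtain ⟨p₀, hp₀, hp₀u⟩ := h2
      by_cases h3 : ∃ j, u j = p₀
      · -- derive a contradiction with hm
        exfalso
        obtain ⟨j₀, rfl⟩ := h3
        apply hm
        refine ⟨j₀, by show Function.invFun e (P (F (u j₀))) = m; rw [hp₀, heinv], ?_⟩
        intro j hj
        by_cases hb : P (F (u j)) ∈ Set.range e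
        · obtain ⟨i, hi⟩ := hb
          have hj' : Function.invFun e (P (F (u j))) = m := hj
          have h1 : e (Function.invFun e (P (F (u j)))) = P (F (u j)) := by
            rw [← hi, heinv]
          have h4 : P (F (u j)) = e m := by rw [← h1, hj']
          exact hu (hp₀u (u j) h4)
        · exact absurd ⟨j, hb, hj⟩ hY1m
      · by_cases h4 : ∀ n t, p₀ ≠ rr n t
        · refine Or.inl (Or.inr ?_)
          refine ⟨p₀, ⟨fun j hj => h3 ⟨j, hj⟩, h4⟩, ?_⟩
          simp only
          rw [hp₀, heinv]
        · push_neg at h4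
          obtain ⟨n, t, rfl⟩ := h4
          by_cases hg : Good n
          · exfalso
            have hGe : e m = G (n:ℕ) t := by
              rw [← hp₀]
              rcases fin2_cases t with rfl | rfl
              · exact hF'rr0 n hg
              · exact hF'rr1 n hg
            have : e m ∈ Set.range e := Set.mem_range_self m
            rw [hrange] at this
            exact this (n:ℕ) hg.1 t hGe
          · exact Or.inr ⟨n, hg, t, hp₀.symm⟩
    · exact Or.inl (Or.inl (Or.inr h2))


end Core

end Stmt9Aux

open Stmt9Aux in
theorem stmt9 {k : ℕ} (α : Fin (k + 1) → ℝ) (β : Fin k → ℝ)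
    (hle : ∀ i, 1 ≤ α i)
    (hmult : (List.ofFn α : Multiset ℝ) = 1 ::ₘ (List.ofFn β : Multiset ℝ))
    (S Shat A : ℕ → ℝ) (hS : IsSEnum α S) (hShat : IsSEnum β Shat)
    (hA : Monotone A) (hA0 : ∀ j, 0 ≤ A j)
    (F : ℕ → ℕ) (hclose : CloseSeq S A F) (hab : AlmostBij F)
    (N₀ : ℕ)
    (hN₀ : ∀ j : ℕ, N₀ < j → ∃ m₁ m₂ : ℕ, m₁ ≠ m₂ ∧
      |A m₁ - (j : ℝ)| < 1 / 10 ∧ |A m₂ - (j : ℝ)| < 1 / 10)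
    (G : ℕ → Fin 2 → ℕ)
    (hGne : ∀ j, N₀ < j → G j 0 ≠ G j 1)
    (hGclose : ∀ j, N₀ < j → ∀ i, |A (G j i) - (j : ℝ)| < 1 / 10)
    (hGmin : ∀ j, N₀ < j → ∀ m : ℕ, m ≠ G j 0 → m ≠ G j 1 →
      ∀ i, |A (G j i) - (j : ℝ)| ≤ |A m - (j : ℝ)|)
    (e : ℕ → ℕ) (he : StrictMono e)
    (hrange : Set.range e = {m : ℕ | ∀ j, N₀ < j → ∀ i, m ≠ G j i}) :
    ∃ Fhat : ℕ → ℕ, CloseSeq Shat (fun j => A (e j)) Fhat ∧ AlmostBij Fhat := by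
  classical
  obtain ⟨hSmono, eS, hSe⟩ := hS
  obtain ⟨hTmono, eT, hTe⟩ := hShat
  -- a permutation matching up α with 1 :: β
  set γ : Fin (k+1) → ℝ := Fin.cons 1 β with hγ
  have hofn : List.ofFn γ = 1 :: List.ofFn β := by
    rw [List.ofFn_succ]
    congr 1
  have hperm : List.Perm (List.ofFn α) (List.ofFn γ) := by
    rw [← Multiset.coe_eq_coe, hmult, hofn, ← Multiset.cons_coe]
  have hsort : α ∘ Tuple.sort α = γ ∘ Tuple.sort γ := by
    apply List.ofFn_injective
    refine List.Perm.eq_of_sortedLE (Tuple.monotone_sort α).sortedLE_ofFn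
      (Tuple.monotone_sort γ).sortedLE_ofFn ?_
    exact ((Tuple.sort α).ofFn_comp_perm α).trans
      (hperm.trans ((Tuple.sort γ).ofFn_comp_perm γ).symm)
  set σ : Equiv.Perm (Fin (k+1)) := (Tuple.sort α).symm.trans (Tuple.sort γ) with hσ
  have hασ : ∀ i, α i = γ (σ i) := by
    intro i
    have h := congrFun hsort ((Tuple.sort α).symm i)
    simp only [Function.comp_apply, Equiv.apply_symm_apply] at h
    exact h
  set i₀ : Fin (k+1) := σ.symm 0 with hi₀
  have hαi₀ : α i₀ = 1 := by
    rw [hασ, Equiv.apply_symm_apply]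
    exact Fin.cons_zero _ _
  set ι : Fin k → Fin (k+1) := fun t => σ.symm t.succ with hι
  have hαι : ∀ t, α (ι t) = β t := by
    intro t
    rw [hασ, Equiv.apply_symm_apply]
    exact Fin.cons_succ _ _ _
  have hιinj : Function.Injective ι := fun a b h =>
    Fin.succ_injective _ (σ.symm.injective h)
  have hιne : ∀ t, ι t ≠ i₀ := fun t h => (Fin.succ_ne_zero t) (σ.symm.injective h)
  -- the index embedding
  set jhat : (Fin k ⊕ (Fin k × ℕ+ × Fin 2)) → (Fin (k+1) ⊕ (Fin (k+1) × ℕ+ × Fin 2)) :=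
    Sum.map Fin.castSucc (Prod.map ι id) with hjhat
  have hsval : ∀ x, sval α (jhat x) = sval β x := by
    rintro (a | ⟨i, n, t⟩)
    · rfl
    · show (n:ℝ) * α (ι i) = (n:ℝ) * β i
      rw [hαι]
  have hjinj : Function.Injective jhat :=
    (Fin.castSucc_injective _).sumMap (hιinj.prodMap Function.injective_id)
  set u : ℕ → ℕ := fun j => eS.symm (jhat (eT j)) with hudef
  set rr : ℕ+ → Fin 2 → ℕ := fun n t => eS.symm (.inr (i₀, n, t)) with hrrdef
  have hSu : ∀ j, S (u j) = Shat j := by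
    intro j
    rw [hSe (u j), hTe j, hudef]
    simp only [Equiv.apply_symm_apply]
    exact hsval (eT j)
  have huinj : Function.Injective u :=
    fun a b h => eT.injective (hjinj (eS.symm.injective h))
  have hrrinj : ∀ {n : ℕ+} {t : Fin 2} {n' : ℕ+} {t' : Fin 2},
      rr n t = rr n' t' → n = n' ∧ t = t' := by
    intro n t n' t' h
    rw [hrrdef] at h
    have h2 := eS.symm.injective h
    simp only [Sum.inr.injEq, Prod.mk.injEq] at h2
    exact ⟨h2.2.1, h2.2.2⟩
  have hSrr : ∀ n t, S (rr n t) = (n:ℝ) := by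
    intro n t
    rw [hSe, hrrdef]
    simp only [Equiv.apply_symm_apply]
    show (n:ℝ) * α i₀ = (n:ℝ)
    rw [hαi₀, mul_one]
  have hdisj : ∀ j n t, u j ≠ rr n t := by
    intro j n t h
    rw [hudef, hrrdef] at h
    have h2 := eS.symm.injective h
    rcases hx : eT j with a | ⟨i, n', t'⟩ <;> rw [hx] at h2
    · exact absurd h2 (by simp [hjhat])
    · simp only [hjhat, Sum.map_inr, Prod.map_apply, id_eq, Sum.inr.injEq,
        Prod.mk.injEq] at h2
      exact hιne i h2.1
  have hcompl : {p : ℕ | (∀ j, u j ≠ p) ∧ ∀ n t, p ≠ rr n t}.Finite := by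
    refine (Set.finite_singleton
      (eS.symm (.inl (Fin.last k)))).subset ?_
    rintro p ⟨h1, h2⟩
    rcases hx : eS p with a | ⟨i, n, t⟩
    · rcases eq_or_ne a (Fin.last k) with rfl | hne
      · simp only [Set.mem_singleton_iff]
        rw [← hx, Equiv.symm_apply_apply]
      · exfalso
        obtain ⟨a', ha'⟩ := Fin.exists_castSucc_eq.mpr hne
        apply h1 (eT.symm (.inl a'))
        rw [hudef]
        simp only [Equiv.apply_symm_apply]
        show eS.symm (.inl a'.castSucc) = p
        rw [ha', ← hx, Equiv.symm_apply_apply]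
      /- -/
    · rcases eq_or_ne i i₀ with rfl | hne
      · exfalso
        refine (h2 n t) ?_
        show p = eS.symm (Sum.inr (i₀, n, t))
        rw [← hx, Equiv.symm_apply_apply]
      · exfalso
        have hσi : σ i ≠ 0 := fun h => hne (by rw [hi₀, ← h, Equiv.symm_apply_apply])
        obtain ⟨j', hj'⟩ := Fin.exists_succ_eq.mpr hσi
        apply h1 (eT.symm (.inr (j', n, t)))
        rw [hudef]
        simp only [Equiv.apply_symm_apply]
        show eS.symm (.inr (ι j', n, t)) = p
        have : ι j' = i := by
          rw [hι]
          show σ.symm j'.succ = i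
          rw [hj', Equiv.symm_apply_apply]
        rw [this, ← hx, Equiv.symm_apply_apply]
  have Sfin : ∀ C : ℝ, {j : ℕ | S j ≤ C}.Finite := by
    intro C
    have hN : {n : ℕ+ | (n:ℝ) ≤ C}.Finite := by
      refine ((Set.finite_Iic (⌈C⌉₊ : ℕ)).preimage
        (f := fun n : ℕ+ => (n:ℕ)) (fun x _ y _ h => PNat.coe_injective h)).subset ?_
      intro n hn
      simp only [Set.mem_setOf_eq] at hn
      simp only [Set.mem_preimage, Set.mem_Iic]
      exact_mod_cast le_trans hn (Nat.le_ceil C)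
    have hfin : {x : Fin (k+1) ⊕ (Fin (k+1) × ℕ+ × Fin 2) | sval α x ≤ C}.Finite := by
      refine ((Set.finite_range Sum.inl).union
        ((Set.finite_univ.prod (hN.prod Set.finite_univ)).image Sum.inr)).subset ?_
      rintro (a | ⟨i, n, t⟩) hx
      · exact Or.inl ⟨a, rfl⟩
      · right
        simp only [Set.mem_image]
        refine ⟨(i, n, t), ?_, rfl⟩
        simp only [Set.mem_prod, Set.mem_univ, true_and, and_true, Set.mem_setOf_eq]
        have h1 : (n:ℝ) ≤ (n:ℝ) * α i := by
          nth_rewrite 1 [← mul_one ((n:ℕ):ℝ)]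
          exact mul_le_mul_of_nonneg_left (hle i) (by positivity)
        have hx' : (n:ℝ) * α i ≤ C := hx
        exact le_trans h1 hx'
    refine (hfin.preimage (f := fun j => eS j) eS.injective.injOn).subset ?_
    intro j hj
    simp only [Set.mem_setOf_eq] at hj
    simp only [Set.mem_preimage, Set.mem_setOf_eq, ← hSe]
    exact hj
  obtain ⟨Fhat, h1, h2⟩ := Stmt9Aux.core CloseSeq (fun _ _ _ => Iff.rfl)
    AlmostBij (fun _ => Iff.rfl) S A F u rr hclose hab Sfin huinj
    (fun {n t n' t'} h => hrrinj h) hSrr hdisj hcompl N₀ G hGne hGmin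
    e he.injective hrange
  refine ⟨Fhat, ?_, h2⟩
  have hre : Shat = fun j => S (u j) := funext fun j => (hSu j).symm
  rw [hre]
  exact h1
end
end

section
/- Let P be a positive self-adjoint operator on a separable Hilbert space with orthonormal eigenbasis {φ_j} and eigenvalues λ_j ≥ λ_k > 0 for j > k, and let S be a bounded operator such that S P^q is bounded for every positive integer q, with ‖S P^{p+N} φ_j‖ ≤ K_{p,N} for all j. If Σ_j λ_j^{−2N} < ∞ for some N, then for every unit vector f orthogonal to span{φ₁,…,φ_k} and every positive integer p, ‖Sf‖ ≤ λ_k^{−p} K_{p,N} (Σ_{j=1}^∞ λ_j^{−2N})^{1/2}. -/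
open Filter Topology

noncomputable section

lemma cs_tsum (a b : ℕ → ℝ) (ha : ∀ i, 0 ≤ a i) (hb : ∀ i, 0 ≤ b i)
    (ha2 : Summable fun i => a i ^ 2) (hb2 : Summable fun i => b i ^ 2) :
    ∑' i, a i * b i ≤ Real.sqrt (∑' i, a i ^ 2) * Real.sqrt (∑' i, b i ^ 2) := by
  have hs : Summable fun i => a i * b i := by
    apply Summable.of_nonneg_of_le (fun i => mul_nonneg (ha i) (hb i))
      (fun i => ?_) (((ha2.add hb2).div_const 2))
    have := two_mul_le_add_sq (a i) (b i)
    nlinarith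
  refine Summable.tsum_le_of_sum_le hs fun s => ?_
  have h1 : (∑ i ∈ s, a i * b i) ^ 2 ≤ (∑ i ∈ s, a i ^ 2) * (∑ i ∈ s, b i ^ 2) :=
    Finset.sum_mul_sq_le_sq_mul_sq s a b
  have hfa : ∑ i ∈ s, a i ^ 2 ≤ ∑' i, a i ^ 2 :=
    Summable.sum_le_tsum s (fun i _ => sq_nonneg _) ha2
  have hfb : ∑ i ∈ s, b i ^ 2 ≤ ∑' i, b i ^ 2 :=
    Summable.sum_le_tsum s (fun i _ => sq_nonneg _) hb2
  have hab : 0 ≤ ∑ i ∈ s, a i * b i :=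
    Finset.sum_nonneg fun i _ => mul_nonneg (ha i) (hb i)
  calc ∑ i ∈ s, a i * b i = Real.sqrt ((∑ i ∈ s, a i * b i) ^ 2) := (Real.sqrt_sq hab).symm
    _ ≤ Real.sqrt ((∑' i, a i ^ 2) * (∑' i, b i ^ 2)) := by
        apply Real.sqrt_le_sqrt
        calc (∑ i ∈ s, a i * b i) ^ 2 ≤ (∑ i ∈ s, a i ^ 2) * (∑ i ∈ s, b i ^ 2) := h1
          _ ≤ (∑' i, a i ^ 2) * (∑' i, b i ^ 2) := by
            apply mul_le_mul hfa hfb (Finset.sum_nonneg fun i _ => sq_nonneg _)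
            exact le_trans (Finset.sum_nonneg fun i _ => sq_nonneg _) hfa
    _ = _ := Real.sqrt_mul (tsum_nonneg fun i => sq_nonneg _) _

theorem stmt11 {H : Type*} [NormedAddCommGroup H] [InnerProductSpace ℝ H] [CompleteSpace H]
    (φ : ℕ → H) (hφ : Orthonormal ℝ φ)
    (hφc : (Submodule.span ℝ (Set.range φ)).topologicalClosure = ⊤)
    (S : H →L[ℝ] H) (lam : ℕ → ℝ) (k p N : ℕ) (hp : 0 < p)
    (hpos : ∀ j, 0 < lam j) (hmono : ∀ j, k ≤ j → lam k ≤ lam j)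
    (K : ℝ) (hK : ∀ j, lam j ^ (p + N) * ‖S (φ j)‖ ≤ K)
    (hsum : Summable fun j => (lam j ^ (2 * N))⁻¹) :
    ∀ f : H, ‖f‖ = 1 → (∀ i < k, (inner ℝ (φ i) f : ℝ) = 0) →
      ‖S f‖ ≤ (lam k ^ p)⁻¹ * (K * Real.sqrt (∑' j, (lam j ^ (2 * N))⁻¹)) := by
  intro f hf hf'
  have hK0 : 0 ≤ K :=
    le_trans (mul_nonneg (pow_nonneg (hpos 0).le _) (norm_nonneg _)) (hK 0)
  set b : HilbertBasis ℕ ℝ H := HilbertBasis.mk hφ (le_of_eq hφc.symm) with hbdef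
  have hbφ : ⇑b = φ := HilbertBasis.coe_mk _ _
  have hbj : ∀ i, b i = φ i := fun i => congrFun hbφ i
  have hNeq : ∀ j, ((lam j ^ N)⁻¹) ^ 2 = (lam j ^ (2 * N))⁻¹ := fun j => by
    rw [inv_pow, ← pow_mul, mul_comm N 2]
  have hNn : ∀ j, (0:ℝ) ≤ (lam j ^ N)⁻¹ := fun j =>
    inv_nonneg.mpr (pow_nonneg (hpos j).le _)
  set c : ℕ → ℝ := fun j => inner ℝ (φ j) f with hcdef
  have hc2 : HasSum (fun j => c j ^ 2) 1 := by
    have h := b.hasSum_inner_mul_inner f f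
    rw [real_inner_self_eq_norm_sq, hf] at h
    norm_num at h
    simp only [hbj] at h
    have he : (fun j => c j ^ 2) = fun j => (inner ℝ f (φ j) : ℝ) * inner ℝ (φ j) f := by
      funext j; simp [hcdef, sq, real_inner_comm]
    rw [he]; exact h
  have hrepr : HasSum (fun j => c j • φ j) f := by
    have h := b.hasSum_repr f
    simp only [b.repr_apply_apply, hbj] at h
    exact h
  have hSf : HasSum (fun j => c j • S (φ j)) (S f) := by
    simpa only [map_smul] using hrepr.mapL S
  have hsumN : Summable fun j => ((lam j ^ N)⁻¹) ^ 2 := by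
    simpa only [hNeq] using hsum
  have hsum2 : Summable fun j => |c j| * (lam j ^ N)⁻¹ := by
    apply Summable.of_nonneg_of_le
      (fun j => mul_nonneg (abs_nonneg _) (hNn j))
      (fun j => ?_) ((hc2.summable.add hsumN).div_const 2)
    have := two_mul_le_add_sq (|c j|) ((lam j ^ N)⁻¹)
    have := sq_abs (c j)
    nlinarith
  have hbound : ∀ j, ‖c j • S (φ j)‖ ≤ (lam k ^ p)⁻¹ * K * (|c j| * (lam j ^ N)⁻¹) := by
    intro j
    rcases lt_or_ge j k with hj | hj
    · have hcj : c j = 0 := hf' j hj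
      simp [hcj]
    · rw [norm_smul, Real.norm_eq_abs]
      have h2 : (0:ℝ) < lam j ^ (p + N) := pow_pos (hpos j) _
      have hSφ : ‖S (φ j)‖ ≤ K * (lam j ^ p)⁻¹ * (lam j ^ N)⁻¹ := by
        have h1 : ‖S (φ j)‖ ≤ K / lam j ^ (p + N) :=
          (le_div_iff₀ h2).mpr (by rw [mul_comm]; exact hK j)
        refine h1.trans_eq ?_
        rw [pow_add, div_eq_mul_inv, mul_inv, mul_assoc]
      have hpk : (lam j ^ p)⁻¹ ≤ (lam k ^ p)⁻¹ :=
        inv_anti₀ (pow_pos (hpos k) _)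
          (pow_le_pow_left₀ (hpos k).le (hmono j hj) _)
      calc |c j| * ‖S (φ j)‖ ≤ |c j| * (K * (lam k ^ p)⁻¹ * (lam j ^ N)⁻¹) := by
            refine mul_le_mul_of_nonneg_left (hSφ.trans ?_) (abs_nonneg _)
            gcongr
            exact hNn j
        _ = (lam k ^ p)⁻¹ * K * (|c j| * (lam j ^ N)⁻¹) := by ring
  have hgsum : Summable fun j => ‖c j • S (φ j)‖ :=
    Summable.of_nonneg_of_le (fun j => norm_nonneg _) hbound (hsum2.mul_left _)
  have h1 : ‖S f‖ ≤ ∑' j, ‖c j • S (φ j)‖ := by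
    rw [← hSf.tsum_eq]; exact norm_tsum_le_tsum_norm hgsum
  have h2 : ∑' j, ‖c j • S (φ j)‖ ≤ (lam k ^ p)⁻¹ * K * ∑' j, |c j| * (lam j ^ N)⁻¹ := by
    calc ∑' j, ‖c j • S (φ j)‖
        ≤ ∑' j, (lam k ^ p)⁻¹ * K * (|c j| * (lam j ^ N)⁻¹) :=
          Summable.tsum_le_tsum hbound hgsum (hsum2.mul_left _)
      _ = (lam k ^ p)⁻¹ * K * ∑' j, |c j| * (lam j ^ N)⁻¹ := tsum_mul_left
  have h3 : ∑' j, |c j| * (lam j ^ N)⁻¹ ≤ Real.sqrt (∑' j, (lam j ^ (2 * N))⁻¹) := by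
    have ha2 : Summable fun j => |c j| ^ 2 := by
      simpa only [sq_abs] using hc2.summable
    have h := cs_tsum (fun j => |c j|) (fun j => (lam j ^ N)⁻¹)
      (fun j => abs_nonneg _) hNn ha2 hsumN
    have ea : (∑' j, |c j| ^ 2) = 1 := by
      simpa only [sq_abs] using hc2.tsum_eq
    have eb : (∑' j, ((lam j ^ N)⁻¹) ^ 2) = ∑' j, (lam j ^ (2 * N))⁻¹ := by
      exact tsum_congr hNeq
    rw [ea, eb, Real.sqrt_one, one_mul] at h
    exact h
  calc ‖S f‖ ≤ (lam k ^ p)⁻¹ * K * ∑' j, |c j| * (lam j ^ N)⁻¹ := h1.trans h2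
    _ ≤ (lam k ^ p)⁻¹ * K * Real.sqrt (∑' j, (lam j ^ (2 * N))⁻¹) := by
        exact mul_le_mul_of_nonneg_left h3
          (mul_nonneg (inv_nonneg.mpr (pow_nonneg (hpos k).le _)) hK0)
    _ = (lam k ^ p)⁻¹ * (K * Real.sqrt (∑' j, (lam j ^ (2 * N))⁻¹)) := by ring
end
end

section
/- Let A = {A_j} be the increasing enumeration of a countable multiset of nonnegative reals and suppose there is a close almost-bijection F : S(R) → A for a finite multiset R of positive reals with k elements. Then the counting function of A satisfies #{j : A_j ≤ t} = (2 Σ_{α∈R} 1/α) t + O(1) as t → ∞. -/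
open Filter Topology

noncomputable section

lemma pnat_card_le (m : ℕ) : Nat.card {n : ℕ+ | (n : ℕ) ≤ m} = m := by
  rcases m with _ | m
  · have h : {n : ℕ+ | (n : ℕ) ≤ 0} = ∅ := by
      ext n; simpa using n.2.ne'
    rw [Nat.card_coe_set_eq, h, Set.ncard_empty]
  · have h : {n : ℕ+ | (n : ℕ) ≤ m + 1} = ↑(Finset.Icc (1 : ℕ+) (Nat.succPNat m)) := by
      ext n
      simp only [Set.mem_setOf_eq, Finset.coe_Icc, Set.mem_Icc, Finset.mem_coe, Finset.mem_Icc]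
      constructor
      · intro hn; exact ⟨n.one_le, by exact_mod_cast hn⟩
      · intro hn; exact_mod_cast hn.2
    rw [Nat.card_coe_set_eq, h, Set.ncard_coe_finset, PNat.card_Icc]
    rfl

lemma scond {k : ℕ} (α : Fin k → ℝ) (hα : ∀ i, 0 < α i) (t : ℝ) (ht : 0 ≤ t)
    (i : Fin k) (n : ℕ+) : (n : ℝ) * α i ≤ t ↔ (n : ℕ) ≤ ⌊t / α i⌋₊ := by
  rw [Nat.le_floor_iff (div_nonneg ht (hα i).le), le_div_iff₀ (hα i)]

lemma sfin' {k : ℕ} (α : Fin k → ℝ) (hα : ∀ i, 0 < α i) (t : ℝ) :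
    {x : Fin k ⊕ (Fin k × ℕ+ × Fin 2) | sval α x ≤ t}.Finite := by
  classical
  set M := Finset.univ.sup (fun i : Fin k => ⌊t / α i⌋₊) with hM
  have hfin : ({n : ℕ+ | (n : ℕ) ≤ M}).Finite := by
    have : {n : ℕ+ | (n : ℕ) ≤ M} = (fun n : ℕ+ => (n : ℕ)) ⁻¹' (Set.Iic M) := rfl
    rw [this]
    exact (Set.finite_Iic M).preimage (fun a _ b _ h => PNat.coe_injective h)
  apply Set.Finite.subset
    ((Set.finite_range Sum.inl).union
      (((Set.finite_univ.prod (hfin.prod Set.finite_univ)).image Sum.inr)))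
  rintro (i | ⟨i, n, b⟩) h
  · exact Or.inl ⟨i, rfl⟩
  · refine Or.inr ⟨(i, n, b), ⟨trivial, ?_, trivial⟩, rfl⟩
    have h' : (n : ℝ) ≤ t / α i := (le_div_iff₀ (hα i)).mpr h
    exact le_trans (Nat.le_floor h') (hM ▸ Finset.le_sup (f := fun i => ⌊t / α i⌋₊) (Finset.mem_univ i))

lemma scount {k : ℕ} (α : Fin k → ℝ) (hα : ∀ i, 0 < α i) (t : ℝ) (ht : 0 ≤ t) :
    Nat.card {x : Fin k ⊕ (Fin k × ℕ+ × Fin 2) | sval α x ≤ t}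
      = k + 2 * ∑ i, ⌊t / α i⌋₊ := by
  classical
  have hfib : ∀ q : Fin k × Fin 2, ({n : ℕ+ | (n : ℝ) * α q.1 ≤ t}).Finite := by
    intro q
    have hs : {n : ℕ+ | (n : ℝ) * α q.1 ≤ t} ⊆
        (fun n : ℕ+ => (n : ℕ)) ⁻¹' (Set.Iic ⌊t / α q.1⌋₊) :=
      fun n hn => (scond α hα t ht q.1 n).mp hn
    exact (((Set.finite_Iic _).preimage (fun a _ b _ h => PNat.coe_injective h)).subset hs)
  let E : {x : Fin k ⊕ (Fin k × ℕ+ × Fin 2) | sval α x ≤ t} ≃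
      (Fin k ⊕ (Σ q : Fin k × Fin 2, {n : ℕ+ | (n : ℝ) * α q.1 ≤ t})) :=
    { toFun := fun x => match x with
        | ⟨.inl i, _⟩ => .inl i
        | ⟨.inr (i, n, b), h⟩ => .inr ⟨(i, b), ⟨n, h⟩⟩
      invFun := fun y => match y with
        | .inl i => ⟨.inl i, ht⟩
        | .inr ⟨(i, b), ⟨n, h⟩⟩ => ⟨.inr (i, n, b), h⟩
      left_inv := by rintro ⟨(i | ⟨i, n, b⟩), h⟩ <;> rfl
      right_inv := by rintro (i | ⟨⟨i, b⟩, n, h⟩) <;> rfl }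
  letI : ∀ q : Fin k × Fin 2, Fintype {n : ℕ+ | (n : ℝ) * α q.1 ≤ t} :=
    fun q => (hfib q).fintype
  have hfibcard : ∀ q : Fin k × Fin 2,
      Fintype.card {n : ℕ+ | (n : ℝ) * α q.1 ≤ t} = ⌊t / α q.1⌋₊ := by
    intro q
    have hset : {n : ℕ+ | (n : ℝ) * α q.1 ≤ t} = {n : ℕ+ | (n : ℕ) ≤ ⌊t / α q.1⌋₊} :=
      Set.ext fun n => scond α hα t ht q.1 n
    rw [← Nat.card_eq_fintype_card, hset, pnat_card_le]
  rw [Nat.card_congr E, Nat.card_sum, Nat.card_eq_fintype_card (α := Fin k),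
    Fintype.card_fin, Nat.card_eq_fintype_card, Fintype.card_sigma]
  congr 1
  simp only [hfibcard]
  rw [Fintype.sum_prod_type_right]
  simp [two_mul, Finset.sum_add_distrib]

theorem stmt16 {k : ℕ} (α : Fin k → ℝ) (hα : ∀ i, 0 < α i)
    (S A : ℕ → ℝ) (hS : IsSEnum α S) (hA : Monotone A)
    (F : ℕ → ℕ) (hclose : CloseSeq S A F) (hab : AlmostBij F) :
    ∃ C : ℝ, ∀ t : ℝ, 0 ≤ t →
      |(Nat.card {j : ℕ | A j ≤ t} : ℝ) - (2 * ∑ i, (α i)⁻¹) * t| ≤ C := by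
  classical
  obtain ⟨hSmono, e, hSe⟩ := hS
  set L := 2 * ∑ i, (α i)⁻¹ with hL
  have hL0 : 0 ≤ L := by
    have : 0 ≤ ∑ i, (α i)⁻¹ :=
      Finset.sum_nonneg fun i _ => inv_nonneg.mpr (hα i).le
    rw [hL]; linarith
  have hSset : ∀ t : ℝ, {j : ℕ | S j ≤ t} = ⇑e ⁻¹' {x | sval α x ≤ t} := by
    intro t; ext j; simp [hSe j]
  have hSfin : ∀ t : ℝ, {j : ℕ | S j ≤ t}.Finite := by
    intro t; rw [hSset t]; exact (sfin' α hα t).preimage e.injective.injOn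
  have hNS : ∀ t : ℝ, 0 ≤ t →
      ({j : ℕ | S j ≤ t}).ncard = k + 2 * ∑ i, ⌊t / α i⌋₊ := by
    intro t ht
    have himg : ⇑e ⁻¹' {x | sval α x ≤ t} = ⇑e.symm '' {x | sval α x ≤ t} := by
      rw [Equiv.image_eq_preimage_symm, Equiv.symm_symm]
    rw [hSset t, himg, Set.ncard_image_of_injective _ e.symm.injective,
      ← Nat.card_coe_set_eq, scount α hα t ht]
  set B := {j : ℕ | (1 : ℝ) ≤ |A (F j) - S j|} with hBdef
  have hB : B.Finite := hclose 1 one_pos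
  set E := {n : ℕ | ¬ ∃! j : ℕ, F j = n} with hEdef
  have hE : E.Finite := hab
  have hBsmall : ∀ j, j ∉ B → |A (F j) - S j| < 1 := by
    intro j hj
    simp only [hBdef, Set.mem_setOf_eq, not_le] at hj
    exact hj
  have hFpre : (F ⁻¹' E).Finite := by
    have hsub : F ⁻¹' E ⊆ B ∪ ⋃ n ∈ E, {j : ℕ | S j ≤ |A n| + 1} := by
      intro j hj
      by_cases hjB : j ∈ B
      · exact Or.inl hjB
      · refine Or.inr (Set.mem_biUnion hj ?_)
        have h2 := abs_lt.mp (hBsmall j hjB)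
        have h3 := le_abs_self (A (F j))
        simp only [Set.mem_setOf_eq]
        linarith [h2.1]
    exact ((hB.union (hE.biUnion fun n _ => hSfin _))).subset hsub
  set G : ℕ → ℕ := fun n => if h : ∃! j, F j = n then h.choose else 0 with hGdef
  have hG : ∀ n, n ∉ E → F (G n) = n := by
    intro n hn
    simp only [hEdef, Set.mem_setOf_eq, not_not] at hn
    simp only [hGdef, dif_pos hn]
    exact hn.choose_spec.1
  have hGinjE : Set.InjOn G Eᶜ := by
    intro n hn m hm h
    rw [← hG n hn, ← hG m hm, h]
  have hGmaps : ∀ t : ℝ, ∀ n ∈ {n : ℕ | A n ≤ t} \ (E ∪ F '' B),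
      G n ∈ {j : ℕ | S j ≤ t + 1} := by
    intro t n hn
    have hnE : n ∉ E := fun h => hn.2 (Or.inl h)
    have hFG : F (G n) = n := hG n hnE
    have hGB : G n ∉ B := fun h => hn.2 (Or.inr ⟨G n, h, hFG⟩)
    have h1 := abs_lt.mp (hBsmall _ hGB)
    rw [hFG] at h1
    have h2 := hn.1
    simp only [Set.mem_setOf_eq] at h2 ⊢
    linarith [h1.1]
  have hGsub : ∀ t : ℝ, {n : ℕ | A n ≤ t} \ (E ∪ F '' B) ⊆ Eᶜ :=
    fun t n hn hc => hn.2 (Or.inl hc)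
  have hAfin : ∀ t : ℝ, {n : ℕ | A n ≤ t}.Finite := by
    intro t
    have hdfin : ({n : ℕ | A n ≤ t} \ (E ∪ F '' B)).Finite :=
      Set.Finite.of_finite_image
        ((hSfin (t + 1)).subset (Set.image_subset_iff.mpr (hGmaps t)))
        (hGinjE.mono (hGsub t))
    have hsub : {n : ℕ | A n ≤ t} ⊆
        (E ∪ F '' B) ∪ ({n : ℕ | A n ≤ t} \ (E ∪ F '' B)) := by
      intro n hn
      by_cases h : n ∈ E ∪ F '' B
      exacts [Or.inl h, Or.inr ⟨hn, h⟩]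
    exact ((hE.union (hB.image F)).union hdfin).subset hsub
  have hup : ∀ t : ℝ, ({n : ℕ | A n ≤ t}).ncard ≤
      ({j : ℕ | S j ≤ t + 1}).ncard + (E ∪ F '' B).ncard := by
    intro t
    have step1 := Set.ncard_le_ncard_diff_add_ncard {n : ℕ | A n ≤ t} (E ∪ F '' B)
      (hE.union (hB.image F))
    have step2 : ({n : ℕ | A n ≤ t} \ (E ∪ F '' B)).ncard ≤
        ({j : ℕ | S j ≤ t + 1}).ncard :=
      Set.ncard_le_ncard_of_injOn G (hGmaps t) (hGinjE.mono (hGsub t)) (hSfin (t + 1))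
    omega
  have hlow : ∀ t : ℝ, ({j : ℕ | S j ≤ t}).ncard ≤
      ({n : ℕ | A n ≤ t + 1}).ncard + (B ∪ F ⁻¹' E).ncard := by
    intro t
    have step1 := Set.ncard_le_ncard_diff_add_ncard {j : ℕ | S j ≤ t} (B ∪ F ⁻¹' E)
      (hB.union hFpre)
    have hmaps : ∀ j ∈ {j : ℕ | S j ≤ t} \ (B ∪ F ⁻¹' E),
        F j ∈ {n : ℕ | A n ≤ t + 1} := by
      intro j hj
      have hjB : j ∉ B := fun h => hj.2 (Or.inl h)
      have h1 := abs_lt.mp (hBsmall j hjB)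
      have h2 := hj.1
      simp only [Set.mem_setOf_eq] at h2 ⊢
      linarith [h1.2]
    have hinj : Set.InjOn F ({j : ℕ | S j ≤ t} \ (B ∪ F ⁻¹' E)) := by
      intro j hj j' hj' h
      have hjE : F j ∉ E := fun hc => hj.2 (Or.inr hc)
      simp only [hEdef, Set.mem_setOf_eq, not_not] at hjE
      exact hjE.unique rfl h.symm
    have step2 := Set.ncard_le_ncard_of_injOn F hmaps hinj (hAfin (t + 1))
    omega
  have hsum : ∀ t : ℝ, L * t = 2 * ∑ i, t / α i := by
    intro t
    simp only [div_eq_inv_mul]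
    rw [hL, mul_assoc, Finset.sum_mul]
  have hNSub : ∀ t : ℝ, 0 ≤ t → (({j : ℕ | S j ≤ t}).ncard : ℝ) ≤ L * t + k := by
    intro t ht
    rw [hNS t ht]
    push_cast
    have hterm : ∀ i ∈ Finset.univ, (⌊t / α i⌋₊ : ℝ) ≤ t / α i :=
      fun i _ => Nat.floor_le (div_nonneg ht (hα i).le)
    have hs := Finset.sum_le_sum hterm
    rw [hsum t]
    linarith
  have hNSlb : ∀ t : ℝ, 0 ≤ t →
      L * t - 2 * k ≤ (({j : ℕ | S j ≤ t}).ncard : ℝ) := by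
    intro t ht
    rw [hNS t ht]
    push_cast
    have hterm : ∀ i ∈ Finset.univ, t / α i ≤ (⌊t / α i⌋₊ : ℝ) + 1 :=
      fun i _ => (Nat.lt_floor_add_one _).le
    have hs := Finset.sum_le_sum hterm
    rw [Finset.sum_add_distrib] at hs
    have hone : ∑ _i : Fin k, (1 : ℝ) = k := by simp
    rw [hone] at hs
    rw [hsum t]
    linarith
  refine ⟨L + 3 * k + ((E ∪ F '' B).ncard : ℝ) + ((B ∪ F ⁻¹' E).ncard : ℝ), ?_⟩
  intro t ht
  rw [Nat.card_coe_set_eq]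
  have hc2 : (0 : ℝ) ≤ ((E ∪ F '' B).ncard : ℝ) := Nat.cast_nonneg _
  have hd : (0 : ℝ) ≤ ((B ∪ F ⁻¹' E).ncard : ℝ) := Nat.cast_nonneg _
  have hk : (0 : ℝ) ≤ (k : ℝ) := Nat.cast_nonneg _
  refine abs_le.mpr ⟨?_, ?_⟩
  · by_cases h1 : 1 ≤ t
    · have hl := hlow (t - 1)
      have hcast : (({j : ℕ | S j ≤ t - 1}).ncard : ℝ) ≤
          (({n : ℕ | A n ≤ t - 1 + 1}).ncard : ℝ) + ((B ∪ F ⁻¹' E).ncard : ℝ) := by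
        exact_mod_cast hl
      rw [sub_add_cancel] at hcast
      have hlb := hNSlb (t - 1) (by linarith)
      linarith
    · have hna : (0 : ℝ) ≤ (({n : ℕ | A n ≤ t}).ncard : ℝ) := Nat.cast_nonneg _
      have hlt : L * t ≤ L * 1 := mul_le_mul_of_nonneg_left (le_of_not_ge h1) hL0
      linarith
  · have hu := hup t
    have hcast : (({n : ℕ | A n ≤ t}).ncard : ℝ) ≤
        (({j : ℕ | S j ≤ t + 1}).ncard : ℝ) + ((E ∪ F '' B).ncard : ℝ) := by
      exact_mod_cast hu
    have hub := hNSub (t + 1) (by linarith)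
    nlinarith [hub, hcast]
end
end

section
/- Let R be a finite multiset of positive reals, and let A be the increasing enumeration of a countable multiset with a close almost-bijection F : S(R) → A. Then for every ε > 0, all but finitely many elements of A lie within ε of the set {0} ∪ ⋃_{α∈R} αℕ. -/
open Filter Topology

noncomputable section

theorem stmt18 {k : ℕ} (α : Fin k → ℝ) (hα : ∀ i, 0 < α i)
    (S A : ℕ → ℝ) (hS : IsSEnum α S)
    (F : ℕ → ℕ) (hclose : CloseSeq S A F) (hab : AlmostBij F) :
    ∀ ε > 0, {j : ℕ | ¬ ∃ x ∈ (({0} : Set ℝ) ∪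
        ⋃ i, Set.range fun n : ℕ+ => (n : ℝ) * α i), |A j - x| < ε}.Finite := by
  intro ε hε
  obtain ⟨hmono, e, he⟩ := hS
  have hSmem : ∀ j, S j ∈ (({0} : Set ℝ) ∪
      ⋃ i, Set.range fun n : ℕ+ => (n : ℝ) * α i) := by
    intro j
    rw [he j]
    rcases e j with i | ⟨i, n, t⟩
    · exact Or.inl rfl
    · exact Or.inr (Set.mem_iUnion.mpr ⟨i, n, rfl⟩)
  have hfin := hclose ε hε
  apply Set.Finite.subset (hab.union (hfin.image F))
  intro n hn
  by_contra hnot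
  simp only [Set.mem_union, not_or] at hnot
  obtain ⟨h1, h2⟩ := hnot
  have hex : ∃! j : ℕ, F j = n := not_not.mp h1
  obtain ⟨j, hj, -⟩ := hex
  have hjgood : ¬ ε ≤ |A (F j) - S j| := fun hb => h2 ⟨j, hb, hj⟩
  exact hn ⟨S j, hSmem j, by rw [← hj]; linarith [not_le.mp hjgood]⟩
end
end

section
/- Let R be a finite multiset of positive reals with min R = L, and let A be a monotone increasing sequence with A_j = S(R)_j + o(1). Then for every ε > 0, there exists J such that for all j ≥ J, any interval of length L + ε contained in [A_J, ∞) contains at least one element of A; consequently the multiplicity of any value in A is eventually at most 2|R|. -/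
open Filter Topology

noncomputable section

lemma exists_succ_mul_mem (L x : ℝ) (hL : 0 < L) (hx : 0 ≤ x) :
    ∃ m : ℕ, x ≤ ((m : ℝ) + 1) * L ∧ ((m : ℝ) + 1) * L ≤ x + L := by
  refine ⟨⌊x / L⌋₊, ?_, ?_⟩
  · have h := Nat.lt_floor_add_one (x / L)
    have := (div_lt_iff₀ hL).mp h
    linarith
  · have h := Nat.floor_le (div_nonneg hx hL.le)
    have := (le_div_iff₀ hL).mp h
    linarith

theorem stmt19 {k : ℕ} (α : Fin k → ℝ) (L : ℝ) (hL : 0 < L)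
    (hmin : ∀ i, L ≤ α i) (hmem : ∃ i, α i = L)
    (S A : ℕ → ℝ) (hS : IsSEnum α S) (hA : Monotone A)
    (hconv : Tendsto (fun j => A j - S j) atTop (nhds 0)) :
    ∀ ε > 0,
      (∃ J : ℕ, ∀ x : ℝ, A J ≤ x → ∃ j : ℕ, A j ∈ Set.Icc x (x + L + ε)) ∧
      (∃ J : ℕ, ∀ v : ℝ, {j : ℕ | J ≤ j ∧ A j = v}.Finite ∧
        Nat.card {j : ℕ | J ≤ j ∧ A j = v} ≤ 2 * k) := by
  obtain ⟨hmono, e, he⟩ := hS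
  obtain ⟨i0, hi0⟩ := hmem
  have hsval_nonneg : ∀ x, 0 ≤ sval α x := by
    rintro (i | ⟨i, n, c⟩)
    · simp [sval]
    · exact le_of_lt (mul_pos (by exact_mod_cast n.pos) (lt_of_lt_of_le hL (hmin i)))
  have hS_nonneg : ∀ j, 0 ≤ S j := fun j => (he j) ▸ hsval_nonneg (e j)
  have hmult : ∀ n : ℕ+, ∃ j : ℕ, S j = (n : ℝ) * L := fun n =>
    ⟨e.symm (.inr (i0, n, 0)), by rw [he, Equiv.apply_symm_apply, sval, hi0]⟩
  have hStop : Tendsto S atTop atTop := by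
    apply tendsto_atTop_atTop_of_monotone hmono
    intro b
    obtain ⟨m, hm⟩ := exists_nat_ge (b / L)
    obtain ⟨j, hj⟩ := hmult ⟨m + 1, Nat.succ_pos m⟩
    refine ⟨j, ?_⟩
    have hj' : S j = ((m : ℝ) + 1) * L := by rw [hj]; norm_num
    have h1 : b / L ≤ (m : ℝ) + 1 := hm.trans (by linarith)
    have := (div_le_iff₀ hL).mp h1
    linarith [hj'.ge]
  have hAtop : Tendsto A atTop atTop := by
    have hrw : A = fun j => (A j - S j) + S j := by funext j; ring
    rw [hrw]
    exact hconv.add_atTop hStop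
  intro ε hε
  constructor
  · -- Part 1
    obtain ⟨J0, hJ0⟩ := Metric.tendsto_atTop.mp hconv (ε / 2) (by linarith)
    obtain ⟨J, hJ⟩ := (hAtop.eventually_ge_atTop (S J0 + ε / 2)).exists
    refine ⟨J, fun x hx => ?_⟩
    have hxS : S J0 + ε / 2 ≤ x := le_trans hJ hx
    have hx0 : 0 ≤ x + ε / 2 := by have := hS_nonneg J0; linarith
    obtain ⟨m, hm1, hm2⟩ := exists_succ_mul_mem L (x + ε / 2) hL hx0
    obtain ⟨j, hj⟩ := hmult ⟨m + 1, Nat.succ_pos _⟩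
    have hjval : S j = ((m : ℝ) + 1) * L := by rw [hj]; norm_num
    have hjJ0 : J0 ≤ j := by
      by_contra h
      have h1 : S j ≤ S J0 := hmono (Nat.le_of_lt (not_le.mp h))
      rw [hjval] at h1
      linarith
    have hd := hJ0 j hjJ0
    rw [Real.dist_eq, sub_zero] at hd
    obtain ⟨hd1, hd2⟩ := abs_lt.mp hd
    exact ⟨j, by constructor <;> [linarith; linarith]⟩
  · -- Part 2
    set δ : ℝ := L / 3 with hδ
    have hδpos : 0 < δ := by positivity
    obtain ⟨J0, hJ0⟩ := Metric.tendsto_atTop.mp hconv δ hδpos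
    obtain ⟨J1, hJ1⟩ := eventually_atTop.mp (hStop.eventually_ge_atTop (δ + 1))
    refine ⟨max J0 J1, fun v => ?_⟩
    set T : Set ℕ := {j : ℕ | max J0 J1 ≤ j ∧ A j = v} with hT
    have hinr : ∀ j ∈ T, ∃ i n c, e j = .inr (i, n, c) := by
      intro j hj
      have hSj : δ + 1 ≤ S j := hJ1 j (le_trans (le_max_right _ _) hj.1)
      rcases hcase : e j with i | ⟨i, n, c⟩
      · exfalso
        have : S j = 0 := by rw [he j, hcase]; rfl
        linarith
      · exact ⟨i, n, c, rfl⟩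
    have hclose : ∀ j ∈ T, |v - S j| < δ := by
      intro j hj
      have := hJ0 j (le_trans (le_max_left _ _) hj.1)
      rw [Real.dist_eq, sub_zero, hj.2] at this
      exact this
    classical
    let f : T → Fin k × Fin 2 := fun j =>
      match e (j : ℕ) with
      | .inl i => (i, 0)
      | .inr (i, _, c) => (i, c)
    have hfinj : Function.Injective f := by
      rintro ⟨j, hj⟩ ⟨j', hj'⟩ hfeq
      obtain ⟨i, n, c, hc⟩ := hinr j hj
      obtain ⟨i', n', c', hc'⟩ := hinr j' hj'
      have hf1 : f ⟨j, hj⟩ = (i, c) := by simp only [f, hc]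
      have hf2 : f ⟨j', hj'⟩ = (i', c') := by simp only [f, hc']
      rw [hf1, hf2] at hfeq
      have hii : i = i' := congrArg Prod.fst hfeq
      have hcc : c = c' := congrArg Prod.snd hfeq
      subst hii
      have hSj : S j = (n : ℝ) * α i := by rw [he j, hc]; rfl
      have hSj' : S j' = (n' : ℝ) * α i := by rw [he j', hc']; rfl
      have h1 := hclose j hj
      have h2 := hclose j' hj'
      have hnn' : n = n' := by
        by_contra hne
        have h3 : (1 : ℝ) ≤ |(n : ℝ) - (n' : ℝ)| := by
          have : (n : ℤ) ≠ (n' : ℤ) := by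
            intro h; exact hne (by exact_mod_cast h)
          have h4 : (1 : ℤ) ≤ |(n : ℤ) - (n' : ℤ)| :=
            Int.one_le_abs (sub_ne_zero.mpr this)
          calc (1 : ℝ) = ((1 : ℤ) : ℝ) := by norm_num
            _ ≤ |((n : ℤ) : ℝ) - ((n' : ℤ) : ℝ)| := by
                rw [← Int.cast_sub, ← Int.cast_abs]; exact_mod_cast h4
            _ = |(n : ℝ) - (n' : ℝ)| := by push_cast; ring_nf
        have hαi : L ≤ α i := hmin i
        have h5 : α i ≤ |(n : ℝ) - (n' : ℝ)| * α i := by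
          nlinarith [abs_nonneg ((n : ℝ) - (n' : ℝ))]
        have h6 : |S j - S j'| = |(n : ℝ) - (n' : ℝ)| * α i := by
          rw [hSj, hSj', ← sub_mul, abs_mul, abs_of_pos (lt_of_lt_of_le hL hαi)]
        have h7 : |S j - S j'| < 2 * δ := by
          have := abs_lt.mp h1
          have := abs_lt.mp h2
          rw [abs_lt]; constructor <;> linarith
        have : 2 * δ < L := by rw [hδ]; linarith
        linarith
      subst hnn'
      have : e j = e j' := by rw [hc, hc', hcc]
      exact Subtype.ext (e.injective this)
    have hfinT : T.Finite := Set.finite_coe_iff.mp (Finite.of_injective f hfinj)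
    refine ⟨hfinT, ?_⟩
    calc Nat.card T ≤ Nat.card (Fin k × Fin 2) := Nat.card_le_card_of_injective f hfinj
      _ = 2 * k := by simp [Nat.card_eq_fintype_card, Nat.mul_comm]
end
end
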